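/- arXiv:1104.3003 — 5 statements merged into one kernel-verified Lean document; each statement's English description precedes it below -/
import Mathlib

section
/- For every integer m ≥ 1 and every labelled combinatorial map (σ, α) with m edges, the Euler characteristic χ(σ, α) = c(σ) − c(α) + c(σ∘α) is an even integer and satisfies χ(σ, α) ≤ 2. -/
/-- Number of cycles of a permutation of `Fin n`, counting fixed points
as cycles of length 1. -/
def cycleCount {n : ℕ} (π : Equiv.Perm (Fin n)) : ℕ :=
  Multiset.card π.cycleType + (Finset.univ.filter fun x => π x = x).card

/-- A labelled combinatorial map: `α` is a fixed-point-free involution and the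
subgroup generated by `σ` and `α` acts transitively. -/
def IsCombMap {n : ℕ} (σ α : Equiv.Perm (Fin n)) : Prop :=
  α * α = 1 ∧ (∀ x, α x ≠ x) ∧
  ∀ x y : Fin n, ∃ g ∈ Subgroup.closure ({σ, α} : Set (Equiv.Perm (Fin n))), g x = y

/-- Euler characteristic of a labelled combinatorial map. -/
def eulerChar {n : ℕ} (σ α : Equiv.Perm (Fin n)) : ℤ :=
  (cycleCount σ : ℤ) - (cycleCount α : ℤ) + (cycleCount (σ * α) : ℤ)

namespace CombMapAux

open Equiv Equiv.Perm

variable {n : ℕ}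

/-- Orbit relation of the subgroup generated by a set of permutations. -/
def OrbRel (S : Set (Equiv.Perm (Fin n))) (x y : Fin n) : Prop :=
  ∃ g ∈ Subgroup.closure S, g x = y

lemma OrbRel.refl (S : Set (Equiv.Perm (Fin n))) (x : Fin n) : OrbRel S x x :=
  ⟨1, Subgroup.one_mem _, rfl⟩

lemma OrbRel.symm {S : Set (Equiv.Perm (Fin n))} {x y : Fin n} :
    OrbRel S x y → OrbRel S y x := by
  rintro ⟨g, hg, rfl⟩
  exact ⟨g⁻¹, Subgroup.inv_mem _ hg, by simp⟩

lemma OrbRel.trans {S : Set (Equiv.Perm (Fin n))} {x y z : Fin n} :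
    OrbRel S x y → OrbRel S y z → OrbRel S x z := by
  rintro ⟨g, hg, rfl⟩ ⟨h, hh, rfl⟩
  exact ⟨h * g, Subgroup.mul_mem _ hh hg, by simp⟩

/-- The setoid of the orbit relation. -/
def orbSetoid (S : Set (Equiv.Perm (Fin n))) : Setoid (Fin n) :=
  ⟨OrbRel S, ⟨fun x => OrbRel.refl S x, OrbRel.symm, OrbRel.trans⟩⟩

/-- Number of orbits of the subgroup generated by `S`. -/
noncomputable def t (S : Set (Equiv.Perm (Fin n))) : ℕ :=
  Nat.card (Quotient (orbSetoid S))

/-- The canonical surjection between orbit quotients. -/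
def qmap {S S' : Set (Equiv.Perm (Fin n))}
    (h : ∀ x y, OrbRel S x y → OrbRel S' x y) :
    Quotient (orbSetoid S) → Quotient (orbSetoid S') :=
  Quot.map id h

lemma qmap_mk {S S' : Set (Equiv.Perm (Fin n))}
    (h : ∀ x y, OrbRel S x y → OrbRel S' x y) (x : Fin n) :
    qmap h (Quotient.mk _ x) = Quotient.mk _ x := rfl

lemma qmap_surjective {S S' : Set (Equiv.Perm (Fin n))}
    (h : ∀ x y, OrbRel S x y → OrbRel S' x y) :
    Function.Surjective (qmap h) := by
  rintro ⟨x⟩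
  exact ⟨Quotient.mk _ x, rfl⟩

lemma t_le_of_imp {S S' : Set (Equiv.Perm (Fin n))}
    (h : ∀ x y, OrbRel S x y → OrbRel S' x y) : t S' ≤ t S :=
  Nat.card_le_card_of_surjective (qmap h) (qmap_surjective h)

lemma orbRel_mono {S S' : Set (Equiv.Perm (Fin n))} (hss : S ⊆ S') :
    ∀ x y, OrbRel S x y → OrbRel S' x y := by
  rintro x y ⟨g, hg, rfl⟩
  exact ⟨g, Subgroup.closure_mono hss hg, rfl⟩

lemma t_mono {S S' : Set (Equiv.Perm (Fin n))} (hss : S ⊆ S') : t S' ≤ t S :=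
  t_le_of_imp (orbRel_mono hss)

lemma orbRel_congr {S S' : Set (Equiv.Perm (Fin n))}
    (hc : Subgroup.closure S = Subgroup.closure S') :
    ∀ x y, OrbRel S x y → OrbRel S' x y := by
  rintro x y ⟨g, hg, rfl⟩
  exact ⟨g, hc ▸ hg, rfl⟩

lemma t_congr {S S' : Set (Equiv.Perm (Fin n))}
    (hc : Subgroup.closure S = Subgroup.closure S') : t S = t S' :=
  le_antisymm (t_le_of_imp (orbRel_congr hc.symm)) (t_le_of_imp (orbRel_congr hc))

/-- Characterization of the orbit relation after inserting one transposition. -/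
lemma orbRel_insert_swap {S : Set (Equiv.Perm (Fin n))} {a b : Fin n} (x y : Fin n) :
    OrbRel (insert (Equiv.swap a b) S) x y ↔
      OrbRel S x y ∨ (OrbRel S x a ∧ OrbRel S b y) ∨ (OrbRel S x b ∧ OrbRel S a y) := by
  set R : Fin n → Fin n → Prop := fun x y =>
    OrbRel S x y ∨ (OrbRel S x a ∧ OrbRel S b y) ∨ (OrbRel S x b ∧ OrbRel S a y) with hR
  have hrefl : ∀ x, R x x := fun x => Or.inl (OrbRel.refl S x)
  have hsymm : ∀ x y, R x y → R y x := by
    rintro x y (h | ⟨h1, h2⟩ | ⟨h1, h2⟩)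
    · exact Or.inl h.symm
    · exact Or.inr (Or.inr ⟨h2.symm, h1.symm⟩)
    · exact Or.inr (Or.inl ⟨h2.symm, h1.symm⟩)
  have htrans : ∀ x y z, R x y → R y z → R x z := by
    rintro x y z (h | ⟨h1, h2⟩ | ⟨h1, h2⟩) (h' | ⟨h1', h2'⟩ | ⟨h1', h2'⟩)
    · exact Or.inl (h.trans h')
    · exact Or.inr (Or.inl ⟨h.trans h1', h2'⟩)
    · exact Or.inr (Or.inr ⟨h.trans h1', h2'⟩)
    · exact Or.inr (Or.inl ⟨h1, h2.trans h'⟩)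
    · exact Or.inl ((h1.trans (h2.trans h1').symm).trans h2')
    · exact Or.inl (h1.trans h2')
    · exact Or.inr (Or.inr ⟨h1, h2.trans h'⟩)
    · exact Or.inl (h1.trans h2')
    · exact Or.inl (h1.trans ((h2.trans h1').symm.trans h2'))
  constructor
  · rintro ⟨g, hg, rfl⟩
    refine Subgroup.closure_induction (p := fun g _ => ∀ x, R x (g x)) ?_ ?_ ?_ ?_ hg x
    · rintro τ hτ x
      rcases hτ with rfl | hτ
      · rcases eq_or_ne x a with rfl | hxa
        · rw [Equiv.swap_apply_left]
          exact Or.inr (Or.inl ⟨OrbRel.refl S x, OrbRel.refl S b⟩)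
        · rcases eq_or_ne x b with rfl | hxb
          · rw [Equiv.swap_apply_right]
            exact Or.inr (Or.inr ⟨OrbRel.refl S x, OrbRel.refl S a⟩)
          · rw [Equiv.swap_apply_of_ne_of_ne hxa hxb]
            exact hrefl x
      · exact Or.inl ⟨τ, Subgroup.subset_closure hτ, rfl⟩
    · intro x; simpa using hrefl x
    · intro g h _ _ pg ph x
      have : (g * h) x = g (h x) := rfl
      rw [this]
      exact htrans _ _ _ (ph x) (pg (h x))
    · intro g _ pg x
      have := pg (g⁻¹ x)
      rw [show g (g⁻¹ x) = x from g.apply_symm_apply x] at this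
      exact hsymm _ _ this
  · have hmono := orbRel_mono (Set.subset_insert (Equiv.swap a b) S)
    have hab : OrbRel (insert (Equiv.swap a b) S) a b :=
      ⟨Equiv.swap a b, Subgroup.subset_closure (Set.mem_insert _ _), Equiv.swap_apply_left _ _⟩
    rintro (h | ⟨h1, h2⟩ | ⟨h1, h2⟩)
    · exact hmono _ _ h
    · exact ((hmono _ _ h1).trans hab).trans (hmono _ _ h2)
    · exact ((hmono _ _ h1).trans hab.symm).trans (hmono _ _ h2)

lemma t_insert_swap_of_rel {S : Set (Equiv.Perm (Fin n))} {a b : Fin n}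
    (hab : OrbRel S a b) : t (insert (Equiv.swap a b) S) = t S := by
  refine le_antisymm (t_mono (Set.subset_insert _ _)) ?_
  have hm := orbRel_mono (Set.subset_insert (Equiv.swap a b) S)
  refine Nat.card_le_card_of_injective (qmap hm) ?_
  rintro ⟨x⟩ ⟨y⟩ hxy
  have h := Quotient.exact hxy
  refine Quotient.sound ?_
  rcases (orbRel_insert_swap x y).1 h with h | ⟨h1, h2⟩ | ⟨h1, h2⟩
  · exact h
  · exact (h1.trans hab).trans h2
  · exact (h1.trans hab.symm).trans h2

lemma t_le_insert_swap_add_one (S : Set (Equiv.Perm (Fin n))) (a b : Fin n) :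
    t S ≤ t (insert (Equiv.swap a b) S) + 1 := by
  classical
  have hm := orbRel_mono (Set.subset_insert (Equiv.swap a b) S)
  let Q := Quotient (orbSetoid S)
  let Q' := Quotient (orbSetoid (insert (Equiv.swap a b) S))
  let j : Q → Q' ⊕ Unit := fun q =>
    if q = Quotient.mk _ b then Sum.inr () else Sum.inl (qmap hm q)
  have hj : Function.Injective j := by
    intro q1 q2 h
    by_cases h1 : q1 = Quotient.mk _ b <;> by_cases h2 : q2 = Quotient.mk _ b
    · rw [h1, h2]
    · simp only [j, if_pos h1, if_neg h2] at h
      cases h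
    · simp only [j, if_neg h1, if_pos h2] at h
      cases h
    · simp only [j, if_neg h1, if_neg h2, Sum.inl.injEq] at h
      obtain ⟨x, rfl⟩ := Quotient.exists_rep q1
      obtain ⟨y, rfl⟩ := Quotient.exists_rep q2
      have hr := Quotient.exact h
      rcases (orbRel_insert_swap x y).1 hr with hh | ⟨hh1, hh2⟩ | ⟨hh1, hh2⟩
      · exact Quotient.sound hh
      · exact absurd (Quotient.sound hh2.symm : Quotient.mk _ y = Quotient.mk _ b) h2
      · exact absurd (Quotient.sound hh1 : Quotient.mk _ x = Quotient.mk _ b) h1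
  calc t S = Nat.card Q := rfl
    _ ≤ Nat.card (Q' ⊕ Unit) := Nat.card_le_card_of_injective j hj
    _ = Nat.card Q' + 1 := by rw [Nat.card_sum]; simp
    _ = t (insert (Equiv.swap a b) S) + 1 := rfl

lemma t_insert_swap_lt {S : Set (Equiv.Perm (Fin n))} {a b : Fin n}
    (hab : ¬ OrbRel S a b) : t (insert (Equiv.swap a b) S) < t S := by
  classical
  have hm := orbRel_mono (Set.subset_insert (Equiv.swap a b) S)
  let Q := Quotient (orbSetoid S)
  let Q' := Quotient (orbSetoid (insert (Equiv.swap a b) S))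
  haveI : Fintype Q := Fintype.ofFinite Q
  haveI : Fintype Q' := Fintype.ofFinite Q'
  have hcard : t (insert (Equiv.swap a b) S) = Fintype.card Q' := Nat.card_eq_fintype_card
  have hcard' : t S = Fintype.card Q := Nat.card_eq_fintype_card
  rw [hcard, hcard']
  refine Fintype.card_lt_of_surjective_not_injective (qmap hm) (qmap_surjective hm) ?_
  intro hinj
  have h1 : qmap hm (Quotient.mk _ a) = qmap hm (Quotient.mk _ b) := by
    rw [qmap_mk, qmap_mk]
    exact Quotient.sound ⟨Equiv.swap a b, Subgroup.subset_closure (Set.mem_insert _ _),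
      Equiv.swap_apply_left _ _⟩
  exact hab (Quotient.exact (hinj h1))

lemma orbRel_singleton {π : Equiv.Perm (Fin n)} {x y : Fin n} :
    OrbRel {π} x y ↔ π.SameCycle x y := by
  constructor
  · rintro ⟨g, hg, rfl⟩
    rw [← Subgroup.zpowers_eq_closure, Subgroup.mem_zpowers_iff] at hg
    obtain ⟨k, rfl⟩ := hg
    exact ⟨k, rfl⟩
  · rintro ⟨k, hk⟩
    refine ⟨π ^ k, ?_, hk⟩
    rw [← Subgroup.zpowers_eq_closure]
    exact zpow_mem (Subgroup.mem_zpowers _) k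

lemma cycleCount_eq_t (π : Equiv.Perm (Fin n)) : cycleCount π = t {π} := by
  classical
  let F : Fin n → ({c // c ∈ π.cycleFactorsFinset} ⊕ {x : Fin n // π x = x}) := fun x =>
    if h : π x = x then Sum.inr ⟨x, h⟩
    else Sum.inl ⟨π.cycleOf x,
      Equiv.Perm.cycleOf_mem_cycleFactorsFinset_iff.2 (Equiv.Perm.mem_support.2 h)⟩
  have hfix : ∀ x y : Fin n, π.SameCycle x y → π x = x → y = x := by
    rintro x y ⟨i, rfl⟩ hx
    exact Equiv.Perm.zpow_apply_eq_self_of_apply_eq_self hx i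
  have hF : ∀ x y, π.SameCycle x y → F x = F y := by
    intro x y hxy
    by_cases hx : π x = x
    · obtain rfl := hfix x y hxy hx
      rfl
    · have hy : ¬ π y = y := by
        intro hy
        exact hx ((hfix y x hxy.symm hy) ▸ hy)
      simp only [F, dif_neg hx, dif_neg hy, Sum.inl.injEq, Subtype.mk.injEq]
      exact hxy.cycleOf_eq
  have hFinj : ∀ x y, F x = F y → π.SameCycle x y := by
    intro x y hxy
    by_cases hx : π x = x <;> by_cases hy : π y = y
    · simp only [F, dif_pos hx, dif_pos hy, Sum.inr.injEq, Subtype.mk.injEq] at hxy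
      exact hxy ▸ Equiv.Perm.SameCycle.refl π x
    · simp only [F, dif_pos hx, dif_neg hy] at hxy
      cases hxy
    · simp only [F, dif_neg hx, dif_pos hy] at hxy
      cases hxy
    · simp only [F, dif_neg hx, dif_neg hy, Sum.inl.injEq, Subtype.mk.injEq] at hxy
      have : y ∈ (π.cycleOf x).support := by
        rw [hxy]
        exact Equiv.Perm.mem_support_cycleOf_iff.2
          ⟨Equiv.Perm.SameCycle.refl π y, Equiv.Perm.mem_support.2 hy⟩
      exact (Equiv.Perm.mem_support_cycleOf_iff.1 this).1
  have hFsurj : Function.Surjective F := by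
    rintro (⟨c, hc⟩ | ⟨x, hx⟩)
    · obtain ⟨hcyc, hsupp⟩ := Equiv.Perm.mem_cycleFactorsFinset_iff.1 hc
      obtain ⟨x, hx, -⟩ := hcyc
      have hxs : x ∈ c.support := Equiv.Perm.mem_support.2 hx
      have hπx : π x ≠ x := by
        rw [← hsupp x hxs]; exact hx
      refine ⟨x, ?_⟩
      simp only [F, dif_neg hπx, Sum.inl.injEq, Subtype.mk.injEq]
      exact (Equiv.Perm.cycle_is_cycleOf hxs hc).symm
    · exact ⟨x, by simp only [F, dif_pos hx]⟩
  let G : Quotient (orbSetoid ({π} : Set (Equiv.Perm (Fin n)))) →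
      ({c // c ∈ π.cycleFactorsFinset} ⊕ {x : Fin n // π x = x}) :=
    Quotient.lift F (fun x y h => hF x y (orbRel_singleton.1 h))
  have hGbij : Function.Bijective G := by
    constructor
    · rintro ⟨x⟩ ⟨y⟩ hxy
      exact Quotient.sound (orbRel_singleton.2 (hFinj x y hxy))
    · rintro z
      obtain ⟨x, rfl⟩ := hFsurj z
      exact ⟨Quotient.mk _ x, rfl⟩
  have hcardeq := Nat.card_eq_of_bijective G hGbij
  have hct : Multiset.card π.cycleType = π.cycleFactorsFinset.card := by
    simp [Equiv.Perm.cycleType]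
  unfold t
  rw [hcardeq, Nat.card_sum, Nat.card_eq_finsetCard, Nat.card_eq_fintype_card,
    Fintype.card_subtype, cycleCount, hct]

lemma sameCycle_mul_swap {π : Equiv.Perm (Fin n)} {a b : Fin n} (hab : a ≠ b)
    (h : ¬ π.SameCycle a b) : (π * Equiv.swap a b).SameCycle a b := by
  classical
  set ρ := π * Equiv.swap a b with hρ
  have hex : ∃ k, 0 < k ∧ ((π ^ k) b = a ∨ (π ^ k) b = b) := by
    refine ⟨orderOf π, orderOf_pos π, Or.inr ?_⟩
    rw [pow_orderOf_eq_one]; rfl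
  set k := Nat.find hex with hk
  obtain ⟨hk0, hkab⟩ := Nat.find_spec hex
  have hmin : ∀ j, 0 < j → j < k → (π ^ j) b ≠ a ∧ (π ^ j) b ≠ b := by
    intro j hj0 hjk
    have := Nat.find_min hex hjk
    push_neg at this
    exact this hj0
  have hclaim : ∀ i, 1 ≤ i → i ≤ k → (ρ ^ i) a = (π ^ i) b := by
    intro i hi1
    induction i, hi1 using Nat.le_induction with
    | base =>
      intro _
      simp [hρ, Equiv.Perm.mul_apply]
    | succ i hi ih =>
      intro hik
      have hik' : i < k := by omega
      have hib := hmin i (by omega) hik'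
      have hroi := ih (by omega)
      rw [pow_succ', Equiv.Perm.mul_apply, hroi, hρ, Equiv.Perm.mul_apply,
        Equiv.swap_apply_of_ne_of_ne hib.1 hib.2, ← Equiv.Perm.mul_apply, ← pow_succ']
  have hfin := hclaim k (by omega) le_rfl
  rcases hkab with hka | hkb
  · have hsc : π.SameCycle b a := ⟨(k : ℤ), by rw [zpow_natCast]; exact hka⟩
    exact absurd hsc.symm h
  · exact ⟨(k : ℤ), by rw [zpow_natCast, hfin]; exact hkb⟩

lemma noncommProd_congr' {M : Type*} [Monoid M] (m₁ m₂ : Multiset M) (h : m₁ = m₂) (c₁) :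
    m₁.noncommProd c₁ = m₂.noncommProd (h ▸ c₁) := by subst h; rfl

lemma closure_pair_mul (τ ρ : Equiv.Perm (Fin n)) :
    Subgroup.closure ({τ, ρ * τ} : Set (Equiv.Perm (Fin n))) =
      Subgroup.closure ({τ, ρ} : Set (Equiv.Perm (Fin n))) := by
  have hτ1 : τ ∈ Subgroup.closure ({τ, ρ * τ} : Set (Equiv.Perm (Fin n))) :=
    Subgroup.subset_closure (Set.mem_insert _ _)
  have hτ2 : τ ∈ Subgroup.closure ({τ, ρ} : Set (Equiv.Perm (Fin n))) :=
    Subgroup.subset_closure (Set.mem_insert _ _)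
  have hρτ : ρ * τ ∈ Subgroup.closure ({τ, ρ} : Set (Equiv.Perm (Fin n))) :=
    Subgroup.mul_mem _ (Subgroup.subset_closure (Set.mem_insert_of_mem _ rfl)) hτ2
  have hρ : ρ ∈ Subgroup.closure ({τ, ρ * τ} : Set (Equiv.Perm (Fin n))) := by
    have hmem : ρ * τ ∈ Subgroup.closure ({τ, ρ * τ} : Set (Equiv.Perm (Fin n))) :=
      Subgroup.subset_closure (Set.mem_insert_of_mem _ rfl)
    have h5 := Subgroup.mul_mem _ hmem (Subgroup.inv_mem _ hτ1)
    rwa [mul_inv_cancel_right] at h5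
  apply le_antisymm <;> rw [Subgroup.closure_le] <;> rintro g hg <;>
    simp only [Set.mem_insert_iff, Set.mem_singleton_iff] at hg <;>
    rcases hg with rfl | rfl <;> assumption

lemma t_single_le_mul_swap (ρ : Equiv.Perm (Fin n)) (a b : Fin n) :
    t {ρ} ≤ t {ρ * Equiv.swap a b} + 1 := by
  have h1 : t {ρ} ≤ t (insert (Equiv.swap a b) {ρ}) + 1 :=
    t_le_insert_swap_add_one _ a b
  have h2 : t (insert (Equiv.swap a b) ({ρ} : Set (Equiv.Perm (Fin n)))) =
      t (insert (Equiv.swap a b) ({ρ * Equiv.swap a b} : Set (Equiv.Perm (Fin n)))) :=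
    (t_congr (closure_pair_mul (Equiv.swap a b) ρ)).symm
  have h3 : t (insert (Equiv.swap a b) ({ρ * Equiv.swap a b} : Set (Equiv.Perm (Fin n)))) ≤
      t {ρ * Equiv.swap a b} :=
    t_mono (Set.singleton_subset_iff.2 (Set.mem_insert_of_mem _ rfl))
  omega

lemma t_mul_swap_le (ρ : Equiv.Perm (Fin n)) (a b : Fin n) :
    t {ρ * Equiv.swap a b} ≤ t {ρ} + 1 := by
  have := t_single_le_mul_swap (ρ * Equiv.swap a b) a b
  rwa [mul_assoc, Equiv.swap_mul_self, mul_one] at this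

lemma t_mul_swap_lt {ρ : Equiv.Perm (Fin n)} {a b : Fin n} (hab : a ≠ b)
    (h : ¬ ρ.SameCycle a b) : t {ρ * Equiv.swap a b} + 1 ≤ t {ρ} := by
  have h1 : (ρ * Equiv.swap a b).SameCycle a b := sameCycle_mul_swap hab h
  have h2 : t (insert (Equiv.swap a b) ({ρ * Equiv.swap a b} : Set (Equiv.Perm (Fin n)))) =
      t {ρ * Equiv.swap a b} :=
    t_insert_swap_of_rel (orbRel_singleton.2 h1)
  have h3 : t (insert (Equiv.swap a b) ({ρ * Equiv.swap a b} : Set (Equiv.Perm (Fin n)))) =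
      t (insert (Equiv.swap a b) ({ρ} : Set (Equiv.Perm (Fin n)))) :=
    t_congr (closure_pair_mul (Equiv.swap a b) ρ)
  have h4 : t (insert (Equiv.swap a b) ({ρ} : Set (Equiv.Perm (Fin n)))) < t {ρ} :=
    t_insert_swap_lt (fun hr => h (orbRel_singleton.1 hr))
  omega

/-- Main induction: adding transpositions one at a time. -/
lemma main_ineq (L : List (Equiv.Perm (Fin n))) (π : Equiv.Perm (Fin n)) :
    (∀ τ ∈ L, ∃ a b : Fin n, a ≠ b ∧ τ = Equiv.swap a b) →
    t {π * L.prod} + t {π} ≤ L.length + 2 * t (insert π {τ | τ ∈ L}) := by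
  induction L using List.reverseRecOn with
  | nil =>
    intro _
    have h0 : ({τ | τ ∈ ([] : List (Equiv.Perm (Fin n)))} : Set (Equiv.Perm (Fin n))) = ∅ := by
      ext g; simp
    rw [h0]
    have h1 : (insert π (∅ : Set (Equiv.Perm (Fin n)))) = {π} := by ext g; simp
    rw [h1]
    simp only [List.prod_nil, mul_one, List.length_nil]
    omega
  | append_singleton L' τ ih =>
    intro hL
    obtain ⟨a, b, hab, rfl⟩ := hL τ (by simp)
    have ih' := ih (fun τ' hτ' => hL τ' (by simp [hτ']))
    set ρ := π * L'.prod with hρdef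
    have hprod : π * (L' ++ [Equiv.swap a b]).prod = ρ * Equiv.swap a b := by
      rw [List.prod_append, List.prod_singleton, hρdef, mul_assoc]
    have hset : (insert π {τ | τ ∈ L' ++ [Equiv.swap a b]} : Set (Equiv.Perm (Fin n))) =
        insert (Equiv.swap a b) (insert π {τ | τ ∈ L'}) := by
      ext g
      simp only [Set.mem_insert_iff, Set.mem_setOf_eq, List.mem_append, List.mem_singleton]
      tauto
    have hlen : (L' ++ [Equiv.swap a b]).length = L'.length + 1 := by simp
    rw [hprod, hset, hlen]
    have hρmem : ρ ∈ Subgroup.closure (insert π {τ | τ ∈ L'}) := by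
      refine Subgroup.mul_mem _ (Subgroup.subset_closure (Set.mem_insert _ _)) ?_
      refine Subgroup.list_prod_mem _ (fun τ' hτ' => ?_)
      exact Subgroup.subset_closure (Set.mem_insert_of_mem _ hτ')
    by_cases h : ρ.SameCycle a b
    · have e1 : t {ρ * Equiv.swap a b} ≤ t {ρ} + 1 := t_mul_swap_le ρ a b
      have e2 : t (insert (Equiv.swap a b) (insert π {τ | τ ∈ L'})) =
          t (insert π {τ | τ ∈ L'}) := by
        apply t_insert_swap_of_rel
        obtain ⟨i, hi⟩ := h
        exact ⟨ρ ^ i, zpow_mem hρmem i, hi⟩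
      omega
    · have e1 : t {ρ * Equiv.swap a b} + 1 ≤ t {ρ} := t_mul_swap_lt hab h
      have e2 : t (insert π {τ | τ ∈ L'}) ≤
          t (insert (Equiv.swap a b) (insert π {τ | τ ∈ L'})) + 1 :=
        t_le_insert_swap_add_one _ a b
      omega

end CombMapAux

open CombMapAux Equiv Equiv.Perm in
/-- The Euler characteristic of a labelled combinatorial map with `m ≥ 1` edges
is an even integer and is at most `2`. -/
theorem eulerChar_even_and_le_two (m : ℕ) (hm : 1 ≤ m)
    (σ α : Equiv.Perm (Fin (2 * m))) (h : IsCombMap σ α) :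
    Even (eulerChar σ α) ∧ eulerChar σ α ≤ 2 := by
  classical
  obtain ⟨hinv, hfix, htrans⟩ := h
  -- basic facts about α
  have hsupp : α.support = Finset.univ := by
    ext x; simp [Equiv.Perm.mem_support, hfix x]
  have horder : orderOf α ∣ 2 := orderOf_dvd_of_pow_eq_one (by rw [pow_two]; exact hinv)
  have h2 : ∀ k ∈ α.cycleType, k = 2 := by
    intro k hk
    have hk2 : k ∣ orderOf α := by
      rw [← Equiv.Perm.lcm_cycleType]
      exact Multiset.dvd_lcm hk
    have hle : 2 ≤ k := Equiv.Perm.two_le_of_mem_cycleType hk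
    exact Nat.le_antisymm (Nat.le_of_dvd two_pos (hk2.trans horder)) hle
  have hsum : α.cycleType.sum = 2 * m := by
    rw [Equiv.Perm.sum_cycleType, hsupp, Finset.card_univ, Fintype.card_fin]
  have hcardct : Multiset.card α.cycleType = m := by
    have : α.cycleType = Multiset.replicate (Multiset.card α.cycleType) 2 :=
      (Multiset.eq_replicate_card).2 h2
    rw [this, Multiset.sum_replicate, smul_eq_mul] at hsum
    omega
  have hfixα : (Finset.univ.filter fun x => α x = x) = ∅ := by
    ext x; simp [hfix x]
  have hccα : cycleCount α = m := by
    rw [cycleCount, hcardct, hfixα]; simp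
  -- α as a product of transpositions
  set L := α.cycleFactorsFinset.toList with hL
  have hLprod : L.prod = α := by
    have h1 := Equiv.Perm.cycleFactorsFinset_noncommProd α
    rw [Finset.noncommProd] at h1
    have e1 : Multiset.map id α.cycleFactorsFinset.val = α.cycleFactorsFinset.val :=
      Multiset.map_id _
    have e2 : ((L : Multiset (Equiv.Perm (Fin (2 * m))))) = α.cycleFactorsFinset.val :=
      Multiset.coe_toList _
    rw [noncommProd_congr' _ _ (e1.trans e2.symm)] at h1
    rwa [Multiset.noncommProd_coe] at h1
  have hLlen : L.length = m := by
    rw [hL, Finset.length_toList]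
    have : α.cycleFactorsFinset.card = Multiset.card α.cycleType := by
      simp [Equiv.Perm.cycleType]
    omega
  have hLswap : ∀ τ ∈ L, ∃ a b : Fin (2 * m), a ≠ b ∧ τ = Equiv.swap a b := by
    intro τ hτ
    have hτf : τ ∈ α.cycleFactorsFinset := (Finset.mem_toList).1 hτ
    have : τ.support.card ∈ α.cycleType := by
      rw [Equiv.Perm.cycleType]
      exact Multiset.mem_map_of_mem _ hτf
    have hcard2 : τ.support.card = 2 := h2 _ this
    exact Equiv.Perm.card_support_eq_two.1 hcard2
  -- the subgroup generated by σ and the transpositions of L is transitive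
  have htransL : ∀ x y : Fin (2 * m), OrbRel (insert σ {τ | τ ∈ L}) x y := by
    intro x y
    obtain ⟨g, hg, hgx⟩ := htrans x y
    refine ⟨g, ?_, hgx⟩
    have hle : Subgroup.closure ({σ, α} : Set (Equiv.Perm (Fin (2 * m)))) ≤
        Subgroup.closure (insert σ {τ | τ ∈ L}) := by
      rw [Subgroup.closure_le]
      intro g' hg'
      rcases hg' with rfl | rfl
      · exact Subgroup.subset_closure (Set.mem_insert _ _)
      · rw [← hLprod]
        exact Subgroup.list_prod_mem _ (fun τ' hτ' =>
          Subgroup.subset_closure (Set.mem_insert_of_mem _ hτ'))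
    exact hle hg
  have ht1 : t (insert σ {τ | τ ∈ L}) ≤ 1 := by
    have hsub : Subsingleton (Quotient (orbSetoid (insert σ {τ | τ ∈ L}))) := by
      constructor
      rintro ⟨x⟩ ⟨y⟩
      exact Quotient.sound (htransL x y)
    rw [t, Nat.card_eq_fintype_card]
    exact Fintype.card_le_one_iff_subsingleton.2 hsub
  -- the main inequality
  have hmain := main_ineq L σ hLswap
  rw [hLprod, hLlen] at hmain
  have hineq : cycleCount (σ * α) + cycleCount σ ≤ m + 2 := by
    rw [cycleCount_eq_t, cycleCount_eq_t]
    omega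
  -- parity
  have hparity : Even (cycleCount σ + cycleCount α + cycleCount (σ * α)) := by
    have hsign : ∀ π : Equiv.Perm (Fin (2 * m)),
        Equiv.Perm.sign π = (-1 : ℤˣ) ^ (π.support.card + Multiset.card π.cycleType) := by
      intro π
      rw [Equiv.Perm.sign_of_cycleType, Equiv.Perm.sum_cycleType]
    have hmul : Equiv.Perm.sign (σ * α) = Equiv.Perm.sign σ * Equiv.Perm.sign α :=
      Equiv.Perm.sign_mul σ α
    rw [hsign, hsign, hsign, ← pow_add] at hmul
    set A := (σ * α).support.card + Multiset.card (σ * α).cycleType with hA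
    set B := σ.support.card + Multiset.card σ.cycleType +
      (α.support.card + Multiset.card α.cycleType) with hB
    have hone : (-1 : ℤˣ) ^ (A + B) = 1 := by
      rw [pow_add, hmul, ← pow_add, ← two_mul, pow_mul]
      simp
    have hevenAB : Even (A + B) := by
      rcases Nat.even_or_odd (A + B) with he | ho
      · exact he
      · rw [Odd.neg_one_pow ho] at hone
        exact absurd hone (by decide)
    -- relate to cycleCount
    have hcomp : ∀ π : Equiv.Perm (Fin (2 * m)),
        π.support.card + (Finset.univ.filter fun x => π x = x).card = 2 * m := by
      intro π
      have : (Finset.univ.filter fun x => π x = x) = π.supportᶜ := by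
        ext x; simp [Equiv.Perm.mem_support]
      rw [this, Finset.card_compl, Fintype.card_fin]
      have := Finset.card_le_univ π.support
      rw [Fintype.card_fin] at this
      omega
    have e1 := hcomp σ
    have e2 := hcomp α
    have e3 := hcomp (σ * α)
    rw [Nat.even_iff] at hevenAB ⊢
    simp only [cycleCount]
    omega
  constructor
  · rw [eulerChar, Int.even_iff]
    rw [Nat.even_iff] at hparity
    omega
  · rw [eulerChar, hccα]
    omega
end

section
/- Fix an integer d ≥ 1. In the ring of multivariate formal power series over ℚ in the variables t, v_1, …, v_d, there exists a unique pair (R, S) of formal power series, both with zero constant term, satisfying the system: R = t + t Σ_{n=1}^{d} v_n Σ_{j=1}^{⌊n/2⌋} ((n−1)!/(j!(j−1)!(n−2j)!)) R^j S^{n−2j} and S = t Σ_{n=1}^{d} v_n Σ_{j=0}^{⌊(n−1)/2⌋} ((n−1)!/((j!)²(n−2j−1)!)) R^j S^{n−2j−1}. -/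
open MvPowerSeries Finsupp

variable {d : ℕ}

/-- degree add -/
lemma deg_add (a b : Fin (d+1) →₀ ℕ) : (a + b).degree = a.degree + b.degree := by
  simp [Finsupp.degree_eq_weight_one, map_add]

lemma deg_X0 : (Finsupp.single (0 : Fin (d+1)) 1).degree = 1 := by
  simp [Finsupp.degree_single]

/-- two power series agree on coefficients of degree < n -/
def EqBelow (n : ℕ) (φ ψ : MvPowerSeries (Fin (d + 1)) ℚ) : Prop :=
  ∀ m : Fin (d + 1) →₀ ℕ, m.degree < n → coeff m φ = coeff m ψ

lemma EqBelow.refl (n : ℕ) (φ : MvPowerSeries (Fin (d + 1)) ℚ) : EqBelow n φ φ :=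
  fun _ _ => rfl

lemma EqBelow.mono {n n' : ℕ} (h : n' ≤ n) {φ ψ : MvPowerSeries (Fin (d + 1)) ℚ}
    (H : EqBelow n φ ψ) : EqBelow n' φ ψ := fun m hm => H m (lt_of_lt_of_le hm h)

lemma EqBelow.trans {n : ℕ} {φ ψ χ : MvPowerSeries (Fin (d + 1)) ℚ}
    (h1 : EqBelow n φ ψ) (h2 : EqBelow n ψ χ) : EqBelow n φ χ :=
  fun m hm => (h1 m hm).trans (h2 m hm)

lemma EqBelow.add {n : ℕ} {φ ψ φ' ψ' : MvPowerSeries (Fin (d + 1)) ℚ}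
    (h1 : EqBelow n φ φ') (h2 : EqBelow n ψ ψ') : EqBelow n (φ + ψ) (φ' + ψ') := by
  intro m hm
  simp [map_add, h1 m hm, h2 m hm]

lemma EqBelow.mul {n : ℕ} {φ ψ φ' ψ' : MvPowerSeries (Fin (d + 1)) ℚ}
    (h1 : EqBelow n φ φ') (h2 : EqBelow n ψ ψ') : EqBelow n (φ * ψ) (φ' * ψ') := by
  intro m hm
  classical
  rw [coeff_mul, coeff_mul]
  refine Finset.sum_congr rfl fun p hp => ?_
  rw [Finset.HasAntidiagonal.mem_antidiagonal] at hp
  have h1d : p.1.degree < n := by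
    refine lt_of_le_of_lt ?_ hm
    rw [← hp, deg_add]; omega
  have h2d : p.2.degree < n := by
    refine lt_of_le_of_lt ?_ hm
    rw [← hp, deg_add]; omega
  rw [h1 p.1 h1d, h2 p.2 h2d]

lemma EqBelow.pow {n : ℕ} {φ φ' : MvPowerSeries (Fin (d + 1)) ℚ}
    (h1 : EqBelow n φ φ') (k : ℕ) : EqBelow n (φ ^ k) (φ' ^ k) := by
  induction k with
  | zero => simpa using EqBelow.refl n 1
  | succ k ih => rw [pow_succ, pow_succ]; exact ih.mul h1

lemma EqBelow.sum {n : ℕ} {α : Type*} (s : Finset α)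
    {f g : α → MvPowerSeries (Fin (d + 1)) ℚ} (h : ∀ a ∈ s, EqBelow n (f a) (g a)) :
    EqBelow n (∑ a ∈ s, f a) (∑ a ∈ s, g a) := by
  intro m hm
  rw [map_sum, map_sum]
  exact Finset.sum_congr rfl fun a ha => h a ha m hm

/-- contraction shift by X 0 -/
lemma EqBelow.X0_mul {n : ℕ} {φ φ' : MvPowerSeries (Fin (d + 1)) ℚ}
    (h : EqBelow n φ φ') : EqBelow (n + 1) (X 0 * φ) (X 0 * φ') := by
  intro m hm
  classical
  rw [show (X 0 : MvPowerSeries (Fin (d+1)) ℚ) = monomial (Finsupp.single 0 1) 1 from rfl,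
    coeff_monomial_mul, coeff_monomial_mul]
  split_ifs with hle
  · congr 1
    apply h
    have := deg_add (Finsupp.single (0 : Fin (d+1)) 1) (m - Finsupp.single 0 1)
    rw [add_tsub_cancel_of_le hle] at this
    rw [deg_X0] at this
    omega
  · rfl
/-- Right-hand side of the equation for `R`: variable `0` is `t` and variable
`i.succ` is `v_{i+1}` (so the vertex degrees `n = i + 1` range over `1,…,d`):
`t + t Σ_{n=1}^{d} v_n Σ_{j=1}^{⌊n/2⌋} ((n−1)!/(j!(j−1)!(n−2j)!)) R^j S^{n−2j}`. -/
noncomputable def Rrhs (d : ℕ) (R S : MvPowerSeries (Fin (d + 1)) ℚ) :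
    MvPowerSeries (Fin (d + 1)) ℚ :=
  X 0 + X 0 *
    ∑ i : Fin d, X i.succ *
      ∑ j ∈ Finset.Icc 1 (((i : ℕ) + 1) / 2),
        (C : ℚ →+* MvPowerSeries (Fin (d + 1)) ℚ)
            ((((i : ℕ)).factorial : ℚ) /
              ((j.factorial : ℚ) * ((j - 1).factorial : ℚ) *
                ((((i : ℕ) + 1) - 2 * j).factorial : ℚ))) *
          R ^ j * S ^ (((i : ℕ) + 1) - 2 * j)

/-- Right-hand side of the equation for `S`:
`t Σ_{n=1}^{d} v_n Σ_{j=0}^{⌊(n−1)/2⌋} ((n−1)!/((j!)²(n−2j−1)!)) R^j S^{n−2j−1}`. -/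
noncomputable def Srhs (d : ℕ) (R S : MvPowerSeries (Fin (d + 1)) ℚ) :
    MvPowerSeries (Fin (d + 1)) ℚ :=
  X 0 *
    ∑ i : Fin d, X i.succ *
      ∑ j ∈ Finset.range ((i : ℕ) / 2 + 1),
        (C : ℚ →+* MvPowerSeries (Fin (d + 1)) ℚ)
            ((((i : ℕ)).factorial : ℚ) /
              ((j.factorial : ℚ) * (j.factorial : ℚ) *
                ((((i : ℕ) + 1) - 2 * j - 1).factorial : ℚ))) *
          R ^ j * S ^ (((i : ℕ) + 1) - 2 * j - 1)

lemma step {n : ℕ} {p q : MvPowerSeries (Fin (d + 1)) ℚ × MvPowerSeries (Fin (d + 1)) ℚ}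
    (h1 : EqBelow n p.1 q.1) (h2 : EqBelow n p.2 q.2) :
    EqBelow (n + 1) (Rrhs d p.1 p.2) (Rrhs d q.1 q.2) ∧
      EqBelow (n + 1) (Srhs d p.1 p.2) (Srhs d q.1 q.2) := by
  constructor
  · refine EqBelow.add (EqBelow.refl _ _) (EqBelow.X0_mul ?_)
    refine EqBelow.sum _ fun i _ => EqBelow.mul (EqBelow.refl _ _) ?_
    exact EqBelow.sum _ fun j _ =>
      EqBelow.mul (EqBelow.mul (EqBelow.refl _ _) (h1.pow j)) (h2.pow _)
  · refine EqBelow.X0_mul ?_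
    refine EqBelow.sum _ fun i _ => EqBelow.mul (EqBelow.refl _ _) ?_
    exact EqBelow.sum _ fun j _ =>
      EqBelow.mul (EqBelow.mul (EqBelow.refl _ _) (h1.pow j)) (h2.pow _)

lemma constCoeff_Rrhs (p q : MvPowerSeries (Fin (d + 1)) ℚ) :
    constantCoeff (Rrhs d p q) = 0 := by
  simp [Rrhs, map_add, map_mul, constantCoeff_X]

lemma constCoeff_Srhs (p q : MvPowerSeries (Fin (d + 1)) ℚ) :
    constantCoeff (Srhs d p q) = 0 := by
  simp [Srhs, map_mul, constantCoeff_X]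

/-- The iteration sequence. -/
noncomputable def seq (d : ℕ) : ℕ →
    MvPowerSeries (Fin (d + 1)) ℚ × MvPowerSeries (Fin (d + 1)) ℚ
  | 0 => (0, 0)
  | k + 1 => (Rrhs d (seq d k).1 (seq d k).2, Srhs d (seq d k).1 (seq d k).2)

lemma seq_stable (d : ℕ) : ∀ k, EqBelow k (seq d k).1 (seq d (k + 1)).1 ∧
    EqBelow k (seq d k).2 (seq d (k + 1)).2 := by
  intro k
  induction k with
  | zero => exact ⟨fun m hm => absurd hm (by omega), fun m hm => absurd hm (by omega)⟩
  | succ k ih => exact step ih.1 ih.2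

lemma seq_stable' (d : ℕ) : ∀ k l, k ≤ l → EqBelow k (seq d k).1 (seq d l).1 ∧
    EqBelow k (seq d k).2 (seq d l).2 := by
  intro k l hkl
  induction l with
  | zero =>
    obtain rfl : k = 0 := by omega
    exact ⟨EqBelow.refl _ _, EqBelow.refl _ _⟩
  | succ l ih =>
    rcases Nat.lt_or_ge k (l + 1) with h | h
    · have h' := ih (by omega)
      have h'' := seq_stable d l
      exact ⟨h'.1.trans (h''.1.mono (by omega)), h'.2.trans (h''.2.mono (by omega))⟩
    · obtain rfl : k = l + 1 := by omega
      exact ⟨EqBelow.refl _ _, EqBelow.refl _ _⟩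

/-- The limits. -/
noncomputable def Rlim (d : ℕ) : MvPowerSeries (Fin (d + 1)) ℚ :=
  fun m => coeff m (seq d (m.degree + 1)).1

noncomputable def Slim (d : ℕ) : MvPowerSeries (Fin (d + 1)) ℚ :=
  fun m => coeff m (seq d (m.degree + 1)).2

lemma coeff_Rlim (m : Fin (d+1) →₀ ℕ) :
    coeff m (Rlim d) = coeff m (seq d (m.degree + 1)).1 := by
  rw [MvPowerSeries.coeff_apply (R := ℚ) (Rlim d) m]; rfl

lemma coeff_Slim (m : Fin (d+1) →₀ ℕ) :
    coeff m (Slim d) = coeff m (seq d (m.degree + 1)).2 := by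
  rw [MvPowerSeries.coeff_apply (R := ℚ) (Slim d) m]; rfl

lemma seq_succ_1 (k : ℕ) : (seq d (k+1)).1 = Rrhs d (seq d k).1 (seq d k).2 := rfl

lemma seq_succ_2 (k : ℕ) : (seq d (k+1)).2 = Srhs d (seq d k).1 (seq d k).2 := rfl

lemma lim_eqBelow (d : ℕ) (n : ℕ) :
    EqBelow n (Rlim d) (seq d n).1 ∧ EqBelow n (Slim d) (seq d n).2 := by
  constructor <;> intro m hm
  · rw [coeff_Rlim]
    rcases le_or_gt (m.degree + 1) n with h | h
    · exact (seq_stable' d (m.degree + 1) n h).1 m (by omega)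
    · exact ((seq_stable' d n (m.degree + 1) (by omega)).1 m (by omega)).symm
  · rw [coeff_Slim]
    rcases le_or_gt (m.degree + 1) n with h | h
    · exact (seq_stable' d (m.degree + 1) n h).2 m (by omega)
    · exact ((seq_stable' d n (m.degree + 1) (by omega)).2 m (by omega)).symm

lemma lim_fixed (d : ℕ) : Rlim d = Rrhs d (Rlim d) (Slim d) ∧
    Slim d = Srhs d (Rlim d) (Slim d) := by
  constructor <;> refine MvPowerSeries.ext fun m => ?_
  · have h := lim_eqBelow d m.degree
    have H := (step (d := d) (p := (Rlim d, Slim d)) (q := seq d m.degree) h.1 h.2).1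
    rw [coeff_Rlim, seq_succ_1, ← H m (by omega)]
  · have h := lim_eqBelow d m.degree
    have H := (step (d := d) (p := (Rlim d, Slim d)) (q := seq d m.degree) h.1 h.2).2
    rw [coeff_Slim, seq_succ_2, ← H m (by omega)]

/-- There is a unique pair `(R, S)` of formal power series in
`ℚ[[t, v_1, …, v_d]]`, both with zero constant term, satisfying the system of
theorem of Bender–Canfield / Bouttier–Di Francesco–Guitter. -/
theorem existsUnique_RS (d : ℕ) (hd : 1 ≤ d) :
    ∃! p : MvPowerSeries (Fin (d + 1)) ℚ × MvPowerSeries (Fin (d + 1)) ℚ,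
      (constantCoeff : MvPowerSeries (Fin (d + 1)) ℚ →+* ℚ) p.1 = 0 ∧
      (constantCoeff : MvPowerSeries (Fin (d + 1)) ℚ →+* ℚ) p.2 = 0 ∧
      p.1 = Rrhs d p.1 p.2 ∧ p.2 = Srhs d p.1 p.2 := by
  refine ⟨(Rlim d, Slim d), ⟨?_, ?_, (lim_fixed d).1, (lim_fixed d).2⟩, ?_⟩
  · rw [(lim_fixed d).1]; exact constCoeff_Rrhs _ _
  · rw [(lim_fixed d).2]; exact constCoeff_Srhs _ _
  · rintro ⟨p1, p2⟩ ⟨-, -, hp1, hp2⟩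
    have hp1' : p1 = Rrhs d p1 p2 := hp1
    have hp2' : p2 = Srhs d p1 p2 := hp2
    have key : ∀ n, EqBelow n p1 (Rlim d) ∧ EqBelow n p2 (Slim d) := by
      intro n
      induction n with
      | zero => exact ⟨fun m hm => absurd hm (by omega), fun m hm => absurd hm (by omega)⟩
      | succ n ih =>
        have h := step (d := d) (p := (p1, p2)) (q := (Rlim d, Slim d)) ih.1 ih.2
        constructor <;> intro m hm
        · rw [hp1', (lim_fixed d).1]; exact h.1 m hm
        · rw [hp2', (lim_fixed d).2]; exact h.2 m hm
    have e1 : p1 = Rlim d := MvPowerSeries.ext fun m => (key (m.degree + 1)).1 m (by omega)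
    have e2 : p2 = Slim d := MvPowerSeries.ext fun m => (key (m.degree + 1)).2 m (by omega)
    simp [e1, e2]
end

section
/- Let R ∈ ℚ[[t]] be the unique formal power series with zero constant term satisfying R = t + 3tR². Then R − R³ = Σ_{k≥0} (2(2k)!/(k!(k+2)!)) · 3^k · t^{2k+1} in ℚ[[t]]. -/
open PowerSeries Finset

private def fq (n : ℕ) : ℚ := if n % 2 = 1 then (catalan (n / 2) : ℚ) * 3 ^ (n / 2) else 0

private lemma fq_even (n : ℕ) (h : n % 2 = 0) : fq n = 0 := by simp [fq, h]

private lemma sum_odd_helper (g : ℕ → ℚ) (hg : ∀ a, a % 2 = 0 → g a = 0) (k : ℕ) :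
    ∑ i ∈ range (2 * k + 1), g i = ∑ a ∈ range k, g (2 * a + 1) := by
  induction k with
  | zero => simpa using hg 0 rfl
  | succ k ih =>
    have h1 : 2 * (k + 1) + 1 = (2 * k + 1) + 1 + 1 := by ring
    rw [h1, sum_range_succ, sum_range_succ, ih, sum_range_succ,
      hg (2 * k + 1 + 1) (by omega)]
    ring

private lemma catalan_q (k : ℕ) :
    (catalan k : ℚ) = ((2 * k).factorial : ℚ) / ((k.factorial : ℚ) * ((k + 1).factorial : ℚ)) := by
  have h1 := succ_mul_catalan_eq_centralBinom k
  have h2 : (2 * k).choose k * k.factorial * k.factorial = (2 * k).factorial := by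
    have := Nat.choose_mul_factorial_mul_factorial (show k ≤ 2 * k by omega)
    simpa [two_mul] using this
  have h3 : (k + 1) * catalan k * k.factorial * k.factorial = (2 * k).factorial := by
    rw [h1, Nat.centralBinom, h2]
  have h4 : ((k + 1 : ℕ) : ℚ) * (catalan k : ℚ) * (k.factorial : ℚ) * (k.factorial : ℚ)
      = ((2 * k).factorial : ℚ) := by exact_mod_cast congrArg (Nat.cast : ℕ → ℚ) h3
  have hk : (k.factorial : ℚ) ≠ 0 := Nat.cast_ne_zero.mpr (Nat.factorial_ne_zero k)
  have hk1 : ((k + 1).factorial : ℚ) ≠ 0 := Nat.cast_ne_zero.mpr (Nat.factorial_ne_zero _)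
  rw [Nat.factorial_succ]
  push_cast
  field_simp
  push_cast at h4
  nlinarith [h4]

private lemma coeff_R (R : PowerSeries ℚ) (h0 : constantCoeff R = 0)
    (hR : R = X + 3 * X * R ^ 2) : ∀ n, coeff n R = fq n := by
  intro n
  induction n using Nat.strong_induction_on with
  | _ n ih =>
    match n with
    | 0 => simpa [fq, coeff_zero_eq_constantCoeff] using h0
    | m + 1 =>
      have key : coeff (m + 1) R = coeff (m + 1) X
          + 3 * ∑ k ∈ range (m + 1), coeff k R * coeff (m - k) R := by
        conv_lhs => rw [hR]
        rw [map_add]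
        congr 1
        have h3 : (3 : PowerSeries ℚ) * X * R ^ 2 = X * ((C 3) * (R * R)) := by
          rw [← map_ofNat C 3]; ring
        rw [h3, coeff_succ_X_mul, coeff_C_mul, coeff_mul,
          Finset.Nat.sum_antidiagonal_eq_sum_range_succ
            (fun a b => coeff a R * coeff b R) m]
      have hsum : ∑ k ∈ range (m + 1), coeff k R * coeff (m - k) R
          = ∑ k ∈ range (m + 1), fq k * fq (m - k) := by
        refine Finset.sum_congr rfl fun k hk => ?_
        rw [Finset.mem_range] at hk
        rw [ih k (by omega), ih (m - k) (by omega)]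
      rw [key, hsum]
      rcases Nat.even_or_odd m with he | ho
      · -- m even, m = 2j
        have he' := Nat.even_iff.mp he
        obtain ⟨j, rfl⟩ : ∃ j, m = 2 * j := ⟨m / 2, by omega⟩
        have hodd : ∀ a, a % 2 = 0 → fq a * fq (2 * j - a) = 0 := fun a ha => by
          rw [fq_even a ha]; ring
        rw [sum_odd_helper _ hodd j]
        rcases Nat.eq_zero_or_pos j with rfl | hj0
        · simp [fq]
        · obtain ⟨i, rfl⟩ : ∃ i, j = i + 1 := ⟨j - 1, by omega⟩
          have hsum2 : ∑ a ∈ range (i + 1), fq (2 * a + 1) * fq (2 * (i + 1) - (2 * a + 1))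
              = (3 : ℚ) ^ i * ∑ a ∈ range (i + 1), (catalan a : ℚ) * (catalan (i - a) : ℚ) := by
            rw [Finset.mul_sum]
            refine Finset.sum_congr rfl fun a ha => ?_
            rw [Finset.mem_range] at ha
            have h1 : (2 * a + 1) % 2 = 1 := by omega
            have h2 : 2 * (i + 1) - (2 * a + 1) = 2 * (i - a) + 1 := by omega
            have h3 : (2 * (i - a) + 1) % 2 = 1 := by omega
            have h4 : (2 * a + 1) / 2 = a := by omega
            have h5 : (2 * (i - a) + 1) / 2 = i - a := by omega
            simp only [fq, h1, h2, h3, h4, h5, if_true]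
            have h7 : (3 : ℚ) ^ i = 3 ^ a * 3 ^ (i - a) := by
              rw [← pow_add]; congr 1; omega
            rw [h7]; ring
          rw [hsum2]
          have hcat : ∑ a ∈ range (i + 1), (catalan a : ℚ) * (catalan (i - a) : ℚ)
              = (catalan (i + 1) : ℚ) := by
            rw [catalan_succ' i, Finset.Nat.sum_antidiagonal_eq_sum_range_succ
              (fun a b => catalan a * catalan b) i]
            push_cast
            rfl
          rw [hcat]
          have hne : 2 * (i + 1) + 1 ≠ 1 := by omega
          rw [coeff_X, if_neg hne]
          have hmod : (2 * (i + 1) + 1) % 2 = 1 := by omega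
          have hdiv : (2 * (i + 1) + 1) / 2 = i + 1 := by omega
          simp only [fq, hmod, if_true, hdiv]
          ring
      · -- m odd: each term 0, and m+1 even
        have ho' := Nat.odd_iff.mp ho
        have hz : ∑ k ∈ range (m + 1), fq k * fq (m - k) = 0 := by
          refine Finset.sum_eq_zero fun k hk => ?_
          rw [Finset.mem_range] at hk
          rcases Nat.even_or_odd k with hk2 | hk2
          · rw [fq_even k (Nat.even_iff.mp hk2)]; ring
          · have hk' := Nat.odd_iff.mp hk2
            have : (m - k) % 2 = 0 := by omega
            rw [fq_even _ this]; ring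
        rw [hz, coeff_X, if_neg (by omega), fq_even (m + 1) (by omega)]
        ring

private lemma keyid (k : ℕ) :
    12 * (catalan k : ℚ) * 3 ^ k - (catalan (k + 1) : ℚ) * 3 ^ (k + 1)
      = 9 * ((2 * ((2 * k).factorial : ℚ) /
          ((k.factorial : ℚ) * ((k + 2).factorial : ℚ))) * 3 ^ k) := by
  rw [catalan_q k, catalan_q (k + 1)]
  have e1 : k + 1 + 1 = k + 2 := by omega
  rw [e1]
  have h1 : ((2 * (k + 1)).factorial : ℚ)
      = (2 * k + 2) * (2 * k + 1) * ((2 * k).factorial : ℚ) := by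
    have e : 2 * (k + 1) = (2 * k + 1) + 1 := by omega
    rw [e, Nat.factorial_succ, Nat.factorial_succ]; push_cast; ring
  have h2 : ((k + 1).factorial : ℚ) = (k + 1) * (k.factorial : ℚ) := by
    rw [Nat.factorial_succ]; push_cast; ring
  have h3 : ((k + 2).factorial : ℚ) = (k + 2) * (k + 1) * (k.factorial : ℚ) := by
    have e : k + 2 = (k + 1) + 1 := by omega
    rw [e, Nat.factorial_succ, Nat.factorial_succ]; push_cast; ring
  rw [h1, h2, h3]
  have hk : (k.factorial : ℚ) ≠ 0 := Nat.cast_ne_zero.mpr (Nat.factorial_ne_zero k)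
  have hk1 : ((k : ℚ) + 1) ≠ 0 := by positivity
  have hk2 : ((k : ℚ) + 2) ≠ 0 := by positivity
  field_simp
  ring

/-- If `R ∈ ℚ[[t]]` is the power series with zero constant term satisfying
`R = t + 3tR²`, then `R − R³ = Σ_{k≥0} (2(2k)!/(k!(k+2)!)) 3^k t^{2k+1}`,
the generating series of rooted planar tetravalent maps (up to a factor `t`). -/
theorem tetravalent_generating_function (R : PowerSeries ℚ)
    (h0 : constantCoeff R = 0) (hR : R = X + 3 * X * R ^ 2) :
    R - R ^ 3 =
      PowerSeries.mk fun n =>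
        if n % 2 = 1 then
          (2 * ((2 * (n / 2)).factorial : ℚ) /
              (((n / 2).factorial : ℚ) * ((n / 2 + 2).factorial : ℚ))) *
            (3 : ℚ) ^ (n / 2)
        else 0 := by
  have hrel : (9 : PowerSeries ℚ) * X ^ 2 * (R - R ^ 3)
      = 12 * X ^ 2 * R - R + X := by
    linear_combination (3 * X * R + 1) * hR
  have hfq := coeff_R R h0 hR
  ext n
  rw [coeff_mk]
  have hc := congrArg (coeff (n + 2)) hrel
  have e9 : (9 : PowerSeries ℚ) * X ^ 2 * (R - R ^ 3)
      = X * (X * (C 9 * (R - R ^ 3))) := by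
    rw [← map_ofNat C 9]; ring
  have e12 : (12 : PowerSeries ℚ) * X ^ 2 * R = X * (X * (C 12 * R)) := by
    rw [← map_ofNat C 12]; ring
  have en : n + 2 = n + 1 + 1 := rfl
  rw [e9, e12, map_add, map_sub, en, coeff_succ_X_mul, coeff_succ_X_mul,
    coeff_succ_X_mul, coeff_succ_X_mul, coeff_C_mul, coeff_C_mul,
    hfq n, hfq (n + 1 + 1), coeff_X, if_neg (by omega)] at hc
  -- hc : 9 * coeff n (R - R³) = 12 * fq n - fq (n+2) + 0
  rcases Nat.even_or_odd n with he | ho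
  · have he' := Nat.even_iff.mp he
    rw [fq_even n he', fq_even (n + 1 + 1) (by omega)] at hc
    rw [if_neg (by omega)]
    linarith
  · have ho' := Nat.odd_iff.mp ho
    rw [if_pos ho']
    set k := n / 2 with hk
    have hn2 : (n + 1 + 1) % 2 = 1 := by omega
    have hd1 : (n + 1 + 1) / 2 = k + 1 := by omega
    simp only [fq, ho', hn2, if_true, hd1, ← hk] at hc
    have := keyid k
    linarith
end

section
/- Let R, S ∈ ℚ[[t]] be formal power series with zero constant term satisfying S = t(S² + 2R) and R = t + 2tRS. Then 2t³ = tS(1 − tS)(1 − 2tS), i.e. t³ = tS(1 − tS)(1 − 2tS)/2, in ℚ[[t]]. -/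
open PowerSeries

/-- For the cubic potential, the auxiliary series `R, S ∈ ℚ[[t]]` (with zero
constant term) satisfying `S = t(S² + 2R)` and `R = t + 2tRS` obey the cubic
equation `2t³ = tS(1 − tS)(1 − 2tS)`, i.e. `t³ = tS(1 − tS)(1 − 2tS)/2`. -/
theorem trivalent_cubic_equation (R S : PowerSeries ℚ)
    (hR0 : constantCoeff R = 0) (hS0 : constantCoeff S = 0)
    (hS : S = X * (S ^ 2 + 2 * R)) (hR : R = X + 2 * X * R * S) :
    2 * X ^ 3 = X * S * (1 - X * S) * (1 - 2 * X * S) ∧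
    (X : PowerSeries ℚ) ^ 3 = X * S * (1 - X * S) * (1 - 2 * X * S) * C (1 / 2 : ℚ) := by
  have key : 2 * X ^ 3 = X * S * (1 - X * S) * (1 - 2 * X * S) := by
    linear_combination (-(X * (1 - 2 * X * S))) * hS + (-(2 * X ^ 2)) * hR
  have h2 : (C (1 / 2 : ℚ)) * 2 = 1 := by
    rw [← map_ofNat (C (R := ℚ)) 2, ← map_mul]
    norm_num
  exact ⟨key, by linear_combination C (1 / 2 : ℚ) * key - X ^ 3 * h2⟩
end

section
/- (Wick/Isserlis theorem.) Let r ≥ 0 and n ≥ 1 be integers, let γ be the product measure on ℝ^r of r copies of the standard Gaussian measure (mean 0, variance 1), and let A be a real matrix with rows indexed by {1,…,2n} and columns indexed by {1,…,r}. For q ∈ {1,…,2n} define the linear function X_q(z) = Σ_{s=1}^{r} A_{q,s} z_s on ℝ^r, and set C = A·Aᵀ, so that C_{q,q'} = ∫ X_q X_{q'} dγ. Then ∫_{ℝ^r} Π_{q=1}^{2n} X_q(z) dγ(z) = Σ_α Π_{q : q < α(q)} C_{q, α(q)}, where the sum runs over all involutions α of {1,…,2n} without fixed points (pairwise matchings of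 the 2n factors) and the product runs over the n pairs {q, α(q)} of each matching. -/
open MeasureTheory ProbabilityTheory

open scoped Classical

open Real Filter
open scoped NNReal ENNReal

noncomputable section Moments

lemma pow_le_factorial_mul_exp (k : ℕ) {x : ℝ} (hx : 0 ≤ x) :
    x ^ k ≤ (k.factorial : ℝ) * Real.exp x := by
  have h1 : x ^ k / (k.factorial : ℝ) ≤ Real.exp x := by
    refine le_trans ?_ (Real.sum_le_exp_of_nonneg hx (k+1))
    exact Finset.single_le_sum (f := fun i => x ^ i / (i.factorial : ℝ))
      (fun i _ => by positivity) (Finset.self_mem_range_succ k)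
  have hk : (0:ℝ) < (k.factorial : ℝ) := by positivity
  calc x ^ k = x ^ k / (k.factorial : ℝ) * (k.factorial : ℝ) := by field_simp
  _ ≤ Real.exp x * (k.factorial : ℝ) := by gcongr
  _ = _ := mul_comm _ _

lemma integrable_pow_mul_gaussExp (k : ℕ) :
    Integrable (fun x : ℝ => x ^ k * Real.exp (-x ^ 2 / 2)) := by
  have h4 : (0:ℝ) < 1/4 := by norm_num
  have hg : Integrable (fun x : ℝ => Real.exp (-(1/4) * x ^ 2)) := integrable_exp_neg_mul_sq h4
  refine ((hg.const_mul ((k.factorial : ℝ) * Real.exp 1))).mono' ?_ ?_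
  · exact ((continuous_pow k).mul (by fun_prop)).aestronglyMeasurable
  · filter_upwards with x
    have h1 : |x| ^ k ≤ (k.factorial : ℝ) * Real.exp |x| :=
      pow_le_factorial_mul_exp k (abs_nonneg x)
    have h2 : |x| ≤ 1 + x ^ 2 / 4 := by
      nlinarith [sq_nonneg (|x| - 2), sq_abs x]
    have h3 : |x ^ k * Real.exp (-x ^ 2 / 2)| = |x| ^ k * Real.exp (-x ^ 2 / 2) := by
      rw [abs_mul, abs_pow, abs_of_pos (Real.exp_pos _)]
    rw [Real.norm_eq_abs, h3]
    have h5 : Real.exp |x| * Real.exp (-x ^ 2 / 2) ≤ Real.exp 1 * Real.exp (-(1/4) * x ^ 2) := by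
      rw [← Real.exp_add, ← Real.exp_add, Real.exp_le_exp]
      linarith
    calc |x| ^ k * Real.exp (-x ^ 2 / 2)
        ≤ ((k.factorial : ℝ) * Real.exp |x|) * Real.exp (-x ^ 2 / 2) :=
          mul_le_mul_of_nonneg_right h1 (Real.exp_pos _).le
      _ = (k.factorial : ℝ) * (Real.exp |x| * Real.exp (-x ^ 2 / 2)) := by ring
      _ ≤ (k.factorial : ℝ) * (Real.exp 1 * Real.exp (-(1/4) * x ^ 2)) :=
          mul_le_mul_of_nonneg_left h5 (by positivity)
      _ = _ := by ring

/-- the unnormalized Gaussian moment -/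
def G (k : ℕ) : ℝ := ∫ x : ℝ, x ^ k * Real.exp (-x ^ 2 / 2)

lemma G_zero : G 0 = Real.sqrt (2 * π) := by
  have : ∀ x : ℝ, x ^ 0 * Real.exp (-x ^ 2 / 2) = Real.exp (-(1/2) * x ^ 2) := by
    intro x; rw [pow_zero, one_mul]; ring_nf
  rw [G]
  simp_rw [this]
  rw [integral_gaussian]
  rw [show π / (1/2 : ℝ) = 2 * π by ring]

lemma G_one : G 1 = 0 := by
  have hderiv : ∀ x : ℝ, HasDerivAt (fun x : ℝ => -Real.exp (-x ^ 2 / 2))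
      (x ^ 1 * Real.exp (-x ^ 2 / 2)) x := by
    intro x
    have h1 : HasDerivAt (fun x : ℝ => -x ^ 2 / 2) (-x) x := by
      have := ((hasDerivAt_pow 2 x).neg).div_const 2
      simpa using this.congr_deriv (by ring)
    have := (h1.exp).fun_neg
    simpa using this.congr_deriv (by ring)
  exact integral_eq_zero_of_hasDerivAt_of_integrable hderiv
    (integrable_pow_mul_gaussExp 1)
    ((integrable_pow_mul_gaussExp 0).neg.congr (by filter_upwards with x; simp))

lemma G_rec (k : ℕ) : G (k + 2) = (k + 1) * G k := by
  have hderiv : ∀ x : ℝ, HasDerivAt (fun x : ℝ => x ^ (k+1) * Real.exp (-x ^ 2 / 2))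
      ((k+1 : ℝ) * (x ^ k * Real.exp (-x ^ 2 / 2)) - x ^ (k+2) * Real.exp (-x ^ 2 / 2)) x := by
    intro x
    have h1 : HasDerivAt (fun x : ℝ => -x ^ 2 / 2) (-x) x := by
      have := ((hasDerivAt_pow 2 x).neg).div_const 2
      simpa using this.congr_deriv (by ring)
    have := (hasDerivAt_pow (k+1) x).mul h1.exp
    refine this.congr_deriv ?_
    push_cast
    ring
  have h0 := integral_eq_zero_of_hasDerivAt_of_integrable hderiv
    (((integrable_pow_mul_gaussExp k).const_mul _).sub (integrable_pow_mul_gaussExp (k+2)))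
    (integrable_pow_mul_gaussExp (k+1))
  rw [integral_sub ((integrable_pow_mul_gaussExp k).const_mul _)
    (integrable_pow_mul_gaussExp (k+2)), integral_const_mul, sub_eq_zero] at h0
  rw [G, G, ← h0]

end Moments

noncomputable section Transfer

lemma gaussianPDF_std_eq :
    gaussianPDF 0 1 = fun x => ((((Real.sqrt (2*π))⁻¹ * Real.exp (-x^2/2)).toNNReal : ℝ≥0) : ℝ≥0∞) := by
  funext x
  rw [gaussianPDF, gaussianPDFReal, ENNReal.ofReal]
  norm_num

lemma pdf_meas : Measurable (fun x : ℝ => ((Real.sqrt (2*π))⁻¹ * Real.exp (-x^2/2)).toNNReal) := by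
  fun_prop

lemma integral_gaussianReal_eq (g : ℝ → ℝ) :
    ∫ x, g x ∂(gaussianReal 0 1)
      = ∫ x, (Real.sqrt (2*π))⁻¹ * (g x * Real.exp (-x^2/2)) := by
  rw [gaussianReal_of_var_ne_zero 0 one_ne_zero, gaussianPDF_std_eq,
    integral_withDensity_eq_integral_smul pdf_meas]
  congr 1
  funext x
  rw [NNReal.smul_def, Real.coe_toNNReal _ (by positivity), smul_eq_mul]
  ring

lemma integrable_gaussianReal_iff (g : ℝ → ℝ) :
    Integrable g (gaussianReal 0 1)
      ↔ Integrable (fun x => (Real.sqrt (2*π))⁻¹ * (g x * Real.exp (-x^2/2))) := by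
  rw [gaussianReal_of_var_ne_zero 0 one_ne_zero, gaussianPDF_std_eq,
    integrable_withDensity_iff_integrable_smul pdf_meas]
  apply integrable_congr
  filter_upwards with x
  rw [NNReal.smul_def, Real.coe_toNNReal _ (by positivity), smul_eq_mul]
  ring

lemma integrable_pow_gaussianReal (k : ℕ) :
    Integrable (fun x : ℝ => x ^ k) (gaussianReal 0 1) := by
  rw [integrable_gaussianReal_iff]
  exact (integrable_pow_mul_gaussExp k).const_mul _

/-- the k-th moment of the standard Gaussian -/
def gmom (k : ℕ) : ℝ := ∫ x, x ^ k ∂(gaussianReal 0 1)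

lemma gmom_eq (k : ℕ) : gmom k = (Real.sqrt (2*π))⁻¹ * G k := by
  rw [gmom, integral_gaussianReal_eq, integral_const_mul, G]

lemma sqrt_two_pi_pos : (0:ℝ) < Real.sqrt (2*π) := Real.sqrt_pos.2 (by positivity)

lemma gmom_zero : gmom 0 = 1 := by
  rw [gmom_eq, G_zero, inv_mul_cancel₀ (ne_of_gt sqrt_two_pi_pos)]

lemma gmom_one : gmom 1 = 0 := by rw [gmom_eq, G_one, mul_zero]

lemma gmom_rec (k : ℕ) : gmom (k + 2) = (k + 1) * gmom k := by
  rw [gmom_eq, gmom_eq, G_rec]; ring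

/-- double factorial-type function: the moments of the standard Gaussian -/
def dfact : ℕ → ℕ
  | 0 => 1
  | 1 => 0
  | (k+2) => (k+1) * dfact k

lemma gmom_eq_dfact : ∀ k, gmom k = dfact k := by
  intro k
  induction k using Nat.strong_induction_on with
  | _ k ih =>
    match k with
    | 0 => simpa [dfact] using gmom_zero
    | 1 => simpa [dfact] using gmom_one
    | (m+2) =>
      rw [gmom_rec, ih m (by omega), dfact]
      push_cast
      ring

end Transfer

noncomputable section PiIntegral

lemma pi_gauss_eq_volume (r : ℕ) :
    letI : MeasureSpace ℝ := ⟨gaussianReal 0 1⟩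
    Measure.pi (fun _ : Fin r => gaussianReal 0 1) = (volume : Measure (Fin r → ℝ)) := rfl

lemma integral_pi_monomial {r : ℕ} (m : Fin r → ℕ) :
    ∫ z : Fin r → ℝ, ∏ s, z s ^ m s ∂(Measure.pi fun _ => gaussianReal 0 1)
      = ∏ s, gmom (m s) := by
  letI : MeasureSpace ℝ := ⟨gaussianReal 0 1⟩
  haveI : SigmaFinite (volume : Measure ℝ) :=
    (inferInstance : SigmaFinite (gaussianReal 0 1))
  rw [pi_gauss_eq_volume r]
  exact integral_fintype_prod_volume_eq_prod (ι := Fin r) (fun s (x : ℝ) => x ^ m s)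

lemma integrable_pi_monomial {r : ℕ} (m : Fin r → ℕ) :
    Integrable (fun z : Fin r → ℝ => ∏ s, z s ^ m s)
      (Measure.pi fun _ => gaussianReal 0 1) := by
  letI : MeasureSpace ℝ := ⟨gaussianReal 0 1⟩
  haveI : SigmaFinite (volume : Measure ℝ) :=
    (inferInstance : SigmaFinite (gaussianReal 0 1))
  rw [pi_gauss_eq_volume r]
  exact Integrable.fintype_prod (f := fun s (x : ℝ) => x ^ m s)
    (fun s => integrable_pow_gaussianReal (m s))

end PiIntegral

section Matchings

open Finset Equiv

lemma dfact_pred (m : ℕ) (hm : 1 ≤ m) : (m - 1) * dfact (m - 2) = dfact m := by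
  match m with
  | 1 => simp [dfact]
  | (k+2) => simp [dfact, Nat.succ_sub_one]

variable {Q : Type*} [Fintype Q] [DecidableEq Q] {S : Type*} [Fintype S] [DecidableEq S]

open scoped Classical in
/-- the set of fixed-point-free involutions with support `T` compatible with `f` -/
noncomputable def matchSet (f : Q → S) (T : Finset Q) : Finset (Equiv.Perm Q) :=
  Finset.univ.filter
    (fun α => α * α = 1 ∧ (∀ q, α q ≠ q ↔ q ∈ T) ∧ ∀ q, f (α q) = f q)

open scoped Classical in
lemma mem_matchSet {f : Q → S} {T : Finset Q} {α : Equiv.Perm Q} :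
    α ∈ matchSet f T ↔
      α * α = 1 ∧ (∀ q, α q ≠ q ↔ q ∈ T) ∧ ∀ q, f (α q) = f q := by
  simp [matchSet]

open scoped Classical in
lemma matchSet_card (f : Q → S) (T : Finset Q) :
    (matchSet f T).card = ∏ s : S, dfact ((T.filter (fun q => f q = s)).card) := by
  induction T using Finset.strongInduction with
  | _ T ih =>
  rcases T.eq_empty_or_nonempty with hT | hT
  · subst hT
    have h1 : matchSet f (∅ : Finset Q) = {1} := by
      ext α
      rw [mem_matchSet, Finset.mem_singleton]
      constructor
      · rintro ⟨-, h2, -⟩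
        ext q
        simp only [Finset.notMem_empty, iff_false, not_not] at h2
        simpa using h2 q
      · rintro rfl
        refine ⟨one_mul 1, fun q => ?_, fun q => rfl⟩
        simp
    simp [h1, dfact]
  · obtain ⟨a, ha⟩ := hT
    set s0 := f a with hs0
    set B : Finset Q := (T.filter (fun q => f q = s0)).erase a with hB
    -- fibering over the value of α a
    have hfib : (matchSet f T).card
        = ∑ b ∈ B, ((matchSet f T).filter (fun α => α a = b)).card := by
      refine Finset.card_eq_sum_card_fiberwise (fun α hα => ?_)
      rw [Finset.mem_coe] at hα ⊢
      rw [mem_matchSet] at hα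
      obtain ⟨h1, h2, h3⟩ := hα
      have hinv : ∀ q, α (α q) = q := fun q => by
        have := congrArg (fun σ : Equiv.Perm Q => σ q) h1
        simpa [Equiv.Perm.mul_apply] using this
      have haa : α a ≠ a := (h2 a).2 ha
      have : α (α a) ≠ α a := by rw [hinv]; exact fun h => haa h.symm
      have hmem : α a ∈ T := (h2 (α a)).1 this
      rw [hB, Finset.mem_erase, Finset.mem_filter]
      exact ⟨haa, hmem, h3 a⟩
    -- each fiber is in bijection with matchings on T minus the pair {a, b}
    have hbij : ∀ b ∈ B, ((matchSet f T).filter (fun α => α a = b)).card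
        = (matchSet f ((T.erase a).erase b)).card := by
      intro b hb
      rw [hB, Finset.mem_erase, Finset.mem_filter] at hb
      obtain ⟨hba, hbT, hfb⟩ := hb
      have hab : a ≠ b := fun h => hba h.symm
      refine Finset.card_bij' (fun α _ => α * Equiv.swap a b)
        (fun β _ => β * Equiv.swap a b) ?_ ?_ ?_ ?_
      · -- forward membership
        intro α hα
        rw [Finset.mem_filter, mem_matchSet] at hα
        obtain ⟨⟨h1, h2, h3⟩, h4⟩ := hα
        have hinv : ∀ q, α (α q) = q := fun q => by
          have := congrArg (fun σ : Equiv.Perm Q => σ q) h1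
          simpa [Equiv.Perm.mul_apply] using this
        have hαb : α b = a := by rw [← h4, hinv]
        have hβ : ∀ q, (α * Equiv.swap a b) q
            = if q = a then a else if q = b then b else α q := by
          intro q
          rcases eq_or_ne q a with rfl | hqa
          · simp [Equiv.Perm.mul_apply, Equiv.swap_apply_left, hαb]
          · rcases eq_or_ne q b with rfl | hqb
            · simp [Equiv.Perm.mul_apply, Equiv.swap_apply_right, h4, hqa, hab.symm]
            · simp [Equiv.Perm.mul_apply, Equiv.swap_apply_of_ne_of_ne hqa hqb, hqa, hqb]
        have hαq : ∀ q, q ≠ a → q ≠ b → (α q ≠ a ∧ α q ≠ b) := by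
          intro q hqa hqb
          constructor
          · intro h; exact hqb (α.injective (h.trans hαb.symm))
          · intro h; exact hqa (α.injective (h.trans h4.symm))
        rw [mem_matchSet]
        refine ⟨?_, ?_, ?_⟩
        · ext q
          rcases eq_or_ne q a with rfl | hqa
          · simp [Equiv.Perm.mul_apply, hβ]
          · rcases eq_or_ne q b with rfl | hqb
            · simp [Equiv.Perm.mul_apply, hβ, hab.symm]
            · obtain ⟨h5, h6⟩ := hαq q hqa hqb
              simp only [Equiv.Perm.mul_apply, Equiv.Perm.one_apply, hβ q,
                if_neg hqa, if_neg hqb, hβ (α q), if_neg h5, if_neg h6]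
              exact hinv q
        · intro q
          rcases eq_or_ne q a with rfl | hqa
          · simp [hβ, hab, ha]
          · rcases eq_or_ne q b with rfl | hqb
            · simp [hβ, hab.symm, hbT]
            · rw [hβ q, if_neg hqa, if_neg hqb, Finset.mem_erase, Finset.mem_erase]
              constructor
              · intro h
                exact ⟨hqb, hqa, (h2 q).1 h⟩
              · rintro ⟨-, -, h⟩
                exact (h2 q).2 h
        · intro q
          rcases eq_or_ne q a with rfl | hqa
          · simp [hβ]
          · rcases eq_or_ne q b with rfl | hqb
            · simp [hβ, hab.symm]
            · rw [hβ q, if_neg hqa, if_neg hqb]; exact h3 q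
      · -- backward membership
        intro β hβmem
        rw [mem_matchSet] at hβmem
        obtain ⟨h1, h2, h3⟩ := hβmem
        have hinv : ∀ q, β (β q) = q := fun q => by
          have := congrArg (fun σ : Equiv.Perm Q => σ q) h1
          simpa [Equiv.Perm.mul_apply] using this
        have hβa : β a = a := by
          by_contra h
          have := (h2 a).1 h
          simp at this
        have hβb : β b = b := by
          by_contra h
          have := (h2 b).1 h
          simp at this
        have hβq : ∀ q, q ≠ a → q ≠ b → (β q ≠ a ∧ β q ≠ b) := by
          intro q hqa hqb
          constructor
          · intro h; exact hqa (β.injective (h.trans hβa.symm))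
          · intro h; exact hqb (β.injective (h.trans hβb.symm))
        have hα : ∀ q, (β * Equiv.swap a b) q
            = if q = a then b else if q = b then a else β q := by
          intro q
          rcases eq_or_ne q a with rfl | hqa
          · simp [Equiv.Perm.mul_apply, Equiv.swap_apply_left, hβb]
          · rcases eq_or_ne q b with rfl | hqb
            · simp [Equiv.Perm.mul_apply, Equiv.swap_apply_right, hβa, hqa, hab.symm]
            · simp [Equiv.Perm.mul_apply, Equiv.swap_apply_of_ne_of_ne hqa hqb, hqa, hqb]
        rw [Finset.mem_filter, mem_matchSet]
        refine ⟨⟨?_, ?_, ?_⟩, by rw [hα a]; simp⟩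
        · ext q
          rcases eq_or_ne q a with rfl | hqa
          · simp [Equiv.Perm.mul_apply, hα, hab.symm]
          · rcases eq_or_ne q b with rfl | hqb
            · simp [Equiv.Perm.mul_apply, hα, hab]
            · obtain ⟨h5, h6⟩ := hβq q hqa hqb
              simp only [Equiv.Perm.mul_apply, Equiv.Perm.one_apply, hα q,
                if_neg hqa, if_neg hqb, hα (β q), if_neg h5, if_neg h6]
              exact hinv q
        · intro q
          rcases eq_or_ne q a with rfl | hqa
          · rw [hα q]; simp [hba, ha]
          · rcases eq_or_ne q b with rfl | hqb
            · rw [hα q, if_neg hqa]; simp [hqa.symm, hbT]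
            · rw [hα q, if_neg hqa, if_neg hqb]
              rw [h2 q, Finset.mem_erase, Finset.mem_erase]
              constructor
              · rintro ⟨-, -, h⟩
                exact h
              · intro h
                exact ⟨hqb, hqa, h⟩
        · intro q
          rcases eq_or_ne q a with rfl | hqa
          · rw [hα q, if_pos rfl, hfb, hs0]
          · rcases eq_or_ne q b with rfl | hqb
            · rw [hα q, if_neg hqa, if_pos rfl, ← hs0, ← hfb]
            · rw [hα q, if_neg hqa, if_neg hqb]; exact h3 q
      · -- left inverse
        intro α _
        show α * Equiv.swap a b * Equiv.swap a b = α
        rw [mul_assoc, Equiv.swap_mul_self, mul_one]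
      · -- right inverse
        intro β _
        show β * Equiv.swap a b * Equiv.swap a b = β
        rw [mul_assoc, Equiv.swap_mul_self, mul_one]
    -- assemble
    have hm : 1 ≤ (T.filter (fun q => f q = s0)).card :=
      Finset.card_pos.2 ⟨a, Finset.mem_filter.2 ⟨ha, hs0.symm⟩⟩
    have hcard : ∀ b ∈ B, (matchSet f ((T.erase a).erase b)).card
        = dfact ((T.filter (fun q => f q = s0)).card - 2)
          * ∏ s ∈ Finset.univ.erase s0, dfact ((T.filter (fun q => f q = s)).card) := by
      intro b hb
      rw [hB, Finset.mem_erase, Finset.mem_filter] at hb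
      obtain ⟨hba, hbT, hfb⟩ := hb
      have hsubset : (T.erase a).erase b ⊆ T :=
        (Finset.erase_subset _ _).trans (Finset.erase_subset _ _)
      have hsub : (T.erase a).erase b ⊂ T :=
        (Finset.ssubset_iff_of_subset hsubset).2 ⟨a, ha, by simp⟩
      rw [ih _ hsub, ← Finset.mul_prod_erase Finset.univ _ (Finset.mem_univ s0)]
      congr 1
      · have hamem : a ∈ T.filter (fun q => f q = s0) := Finset.mem_filter.2 ⟨ha, hs0.symm⟩
        have hbmem : b ∈ (T.filter (fun q => f q = s0)).erase a :=
          Finset.mem_erase.2 ⟨hba, Finset.mem_filter.2 ⟨hbT, hfb⟩⟩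
        rw [Finset.filter_erase, Finset.filter_erase, Finset.card_erase_of_mem hbmem,
          Finset.card_erase_of_mem hamem, Nat.sub_sub]
      · refine Finset.prod_congr rfl (fun s hs => ?_)
        rw [Finset.mem_erase] at hs
        congr 1
        rw [Finset.filter_erase, Finset.filter_erase,
          Finset.erase_eq_of_notMem, Finset.erase_eq_of_notMem]
        · intro hmem
          exact hs.1 (hs0.trans (Finset.mem_filter.1 hmem).2).symm
        · intro hmem
          rw [Finset.mem_erase, Finset.mem_filter] at hmem
          exact hs.1 ((hfb ▸ hmem.2.2 : s0 = s)).symm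
    have hBcard : B.card = (T.filter (fun q => f q = s0)).card - 1 := by
      rw [hB, Finset.card_erase_of_mem (Finset.mem_filter.2 ⟨ha, hs0.symm⟩ :
        a ∈ T.filter (fun q => f q = s0))]
    calc (matchSet f T).card
        = ∑ b ∈ B, ((matchSet f T).filter (fun α => α a = b)).card := hfib
      _ = ∑ b ∈ B, (dfact ((T.filter (fun q => f q = s0)).card - 2)
          * ∏ s ∈ Finset.univ.erase s0, dfact ((T.filter (fun q => f q = s)).card)) :=
          Finset.sum_congr rfl (fun b hb => (hbij b hb).trans (hcard b hb))
      _ = ((T.filter (fun q => f q = s0)).card - 1)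
          * (dfact ((T.filter (fun q => f q = s0)).card - 2)
          * ∏ s ∈ Finset.univ.erase s0, dfact ((T.filter (fun q => f q = s)).card)) := by
          rw [Finset.sum_const, hBcard, smul_eq_mul]
      _ = dfact ((T.filter (fun q => f q = s0)).card)
          * ∏ s ∈ Finset.univ.erase s0, dfact ((T.filter (fun q => f q = s)).card) := by
          rw [← mul_assoc, dfact_pred _ hm]
      _ = ∏ s : S, dfact ((T.filter (fun q => f q = s)).card) :=
          Finset.mul_prod_erase Finset.univ
            (fun s => dfact ((T.filter (fun q => f q = s)).card)) (Finset.mem_univ s0)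

end Matchings

noncomputable section Assembly

open Finset

lemma prod_comp_eq_prod_pow {r : ℕ} {Q' : Type*} [Fintype Q'] [DecidableEq Q']
    (z : Fin r → ℝ) (g : Q' → Fin r) :
    ∏ q, z (g q) = ∏ s, z s ^ (Finset.univ.filter (fun q => g q = s)).card := by
  rw [← Finset.prod_fiberwise_of_maps_to (fun q _ => Finset.mem_univ (g q)) (fun q => z (g q))]
  refine Finset.prod_congr rfl fun s _ => ?_
  have h : ∀ q ∈ Finset.univ.filter (fun q => g q = s), z (g q) = z s := fun q hq => by
    rw [(Finset.mem_filter.1 hq).2]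
  rw [Finset.prod_congr rfl h, Finset.prod_const]

lemma gmom_two : gmom 2 = 1 := by
  rw [show (2:ℕ) = 0 + 2 from rfl, gmom_rec, gmom_zero]
  norm_num

/-- second moments of the product Gaussian -/
lemma integral_pi_mul {r : ℕ} (s t : Fin r) :
    ∫ z : Fin r → ℝ, z s * z t ∂(Measure.pi fun _ => gaussianReal 0 1)
      = if s = t then 1 else 0 := by
  classical
  have hzz : ∀ z : Fin r → ℝ, z s * z t
      = ∏ u, z u ^ ((if u = s then 1 else 0) + (if u = t then 1 else 0)) := by
    intro z
    simp_rw [pow_add]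
    rw [Finset.prod_mul_distrib]
    have h1 : ∀ v : Fin r, ∏ u, z u ^ (if u = v then 1 else 0) = z v := by
      intro v
      rw [Finset.prod_eq_single v (fun u _ hu => by rw [if_neg hu, pow_zero])
        (fun h => absurd (Finset.mem_univ v) h), if_pos rfl, pow_one]
    rw [h1 s, h1 t]
  simp_rw [hzz]
  rw [integral_pi_monomial]
  rcases eq_or_ne s t with rfl | hst
  · rw [if_pos rfl]
    rw [Finset.prod_eq_single s (fun u _ hu => by rw [if_neg hu]; exact gmom_zero)
      (fun h => absurd (Finset.mem_univ s) h), if_pos rfl]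
    exact gmom_two
  · rw [if_neg hst]
    refine Finset.prod_eq_zero (Finset.mem_univ s) ?_
    rw [if_pos rfl, if_neg hst, gmom_one]

lemma integrable_pi_mul_mul {r : ℕ} (c : ℝ) (s t : Fin r) :
    Integrable (fun z : Fin r → ℝ => c * (z s * z t))
      (Measure.pi fun _ => gaussianReal 0 1) := by
  classical
  refine ((integrable_pi_monomial
    (fun u => (if u = s then 1 else 0) + (if u = t then 1 else 0))).const_mul c).congr
    (Filter.Eventually.of_forall fun z => ?_)
  congr 1
  simp_rw [pow_add]
  rw [Finset.prod_mul_distrib]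
  have h1 : ∀ v : Fin r, ∏ u, z u ^ (if u = v then 1 else 0) = z v := by
    intro v
    rw [Finset.prod_eq_single v (fun u _ hu => by rw [if_neg hu, pow_zero])
      (fun h => absurd (Finset.mem_univ v) h), if_pos rfl, pow_one]
  rw [h1 s, h1 t]

/-- the covariance part of the theorem -/
lemma covariance_part {N r : ℕ} (A : Matrix (Fin N) (Fin r) ℝ) (q q' : Fin N) :
    (A * A.transpose) q q' =
      ∫ z : Fin r → ℝ, (∑ s, A q s * z s) * (∑ s, A q' s * z s)
        ∂(Measure.pi fun _ : Fin r => gaussianReal 0 1) := by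
  classical
  have hexp : ∀ z : Fin r → ℝ, (∑ s, A q s * z s) * (∑ s, A q' s * z s)
      = ∑ s, ∑ t, (A q s * A q' t) * (z s * z t) := by
    intro z
    rw [Finset.sum_mul_sum]
    refine Finset.sum_congr rfl fun s _ => Finset.sum_congr rfl fun t _ => by ring
  simp_rw [hexp]
  rw [integral_finset_sum _ (fun s _ => integrable_finset_sum _
    (fun t _ => integrable_pi_mul_mul _ s t))]
  have : ∀ s, ∫ z : Fin r → ℝ, ∑ t, (A q s * A q' t) * (z s * z t)
      ∂(Measure.pi fun _ : Fin r => gaussianReal 0 1)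
      = ∑ t, (A q s * A q' t) * (if s = t then 1 else 0) := by
    intro s
    rw [integral_finset_sum _ (fun t _ => integrable_pi_mul_mul _ s t)]
    refine Finset.sum_congr rfl fun t _ => ?_
    rw [MeasureTheory.integral_const_mul, integral_pi_mul]
  simp_rw [this, mul_ite, mul_one, mul_zero, Finset.sum_ite_eq, Finset.mem_univ, if_pos]
  rw [Matrix.mul_apply]
  refine Finset.sum_congr rfl fun s _ => ?_
  rw [Matrix.transpose_apply]

end Assembly

noncomputable section Assembly2

open Finset

open scoped Classical in
lemma lhs_expand {N r : ℕ} (A : Matrix (Fin N) (Fin r) ℝ) :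
    ∫ z : Fin r → ℝ, ∏ q, ∑ s, A q s * z s ∂(Measure.pi fun _ => gaussianReal 0 1)
      = ∑ f : Fin N → Fin r, (∏ q, A q (f q))
          * ∏ s, gmom ((Finset.univ.filter (fun q => f q = s)).card) := by
  have hexp : ∀ z : Fin r → ℝ, ∏ q, ∑ s, A q s * z s
      = ∑ f : Fin N → Fin r, (∏ q, A q (f q))
          * ∏ s, z s ^ ((Finset.univ.filter (fun q => f q = s)).card) := by
    intro z
    rw [Finset.prod_univ_sum, ← Fintype.piFinset_univ]
    refine Finset.sum_congr rfl fun f _ => ?_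
    rw [Finset.prod_mul_distrib, prod_comp_eq_prod_pow]
  simp_rw [hexp]
  rw [integral_finset_sum _ (fun f _ => (integrable_pi_monomial _).const_mul _)]
  refine Finset.sum_congr rfl fun f _ => ?_
  rw [MeasureTheory.integral_const_mul, integral_pi_monomial]

open scoped Classical in
lemma prod_cov_expand {N r : ℕ} (A : Matrix (Fin N) (Fin r) ℝ) (α : Equiv.Perm (Fin N))
    (h1 : α * α = 1) (h2 : ∀ q, α q ≠ q) :
    ∏ q ∈ Finset.univ.filter (fun q : Fin N => q < α q), (∑ s, A q s * A (α q) s)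
      = ∑ f ∈ Finset.univ.filter (fun f : Fin N → Fin r => ∀ q, f (α q) = f q),
          ∏ q, A q (f q) := by
  have hinv : ∀ q, α (α q) = q := fun q => by
    have := congrArg (fun σ : Equiv.Perm (Fin N) => σ q) h1
    simpa [Equiv.Perm.mul_apply] using this
  set P : Finset (Fin N) := Finset.univ.filter (fun q => q < α q) with hP
  have hmemP : ∀ q, q ∈ P ↔ q < α q := fun q => by simp [hP]
  have hPc : ∀ q, q ∉ P ↔ α q < q := by
    intro q
    rw [hmemP, not_lt]
    exact ⟨fun h => lt_of_le_of_ne h (h2 q), le_of_lt⟩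
  have hswap : ∀ q, q ∉ P → α q ∈ P := by
    intro q hq
    rw [hmemP, hinv]
    exact (hPc q).1 hq
  have hswap' : ∀ q, q ∈ P → α q ∉ P := by
    intro q hq
    rw [hPc, hinv]
    exact (hmemP q).1 hq
  -- the extension of g : ↥P → Fin r to all of Fin N
  set ext : (↥P → Fin r) → (Fin N → Fin r) := fun g q =>
    if hq : q ∈ P then g ⟨q, hq⟩ else g ⟨α q, hswap q hq⟩ with hext
  have hext_mem : ∀ g q (hq : q ∈ P), ext g q = g ⟨q, hq⟩ := by
    intro g q hq; rw [hext]; exact dif_pos hq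
  have hext_not : ∀ g q (hq : q ∉ P), ext g q = g ⟨α q, hswap q hq⟩ := by
    intro g q hq; rw [hext]; exact dif_neg hq
  rw [← Finset.prod_coe_sort P, Finset.prod_univ_sum]
  refine Finset.sum_bij' (fun g _ => ext g)
    (fun f _ => fun q : ↥P => f q.1) ?_ ?_ ?_ ?_ ?_
  · -- forward membership
    intro g _
    rw [Finset.mem_filter]
    refine ⟨Finset.mem_univ _, fun q => ?_⟩
    show ext g (α q) = ext g q
    by_cases hq : q ∈ P
    · rw [hext_mem g q hq, hext_not g (α q) (hswap' q hq)]
      congr 1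
      exact Subtype.ext (hinv q)
    · rw [hext_not g q hq, hext_mem g (α q) (hswap q hq)]
  · -- backward membership
    intro f _
    exact Fintype.mem_piFinset.2 fun q => Finset.mem_univ _
  · -- left inverse
    intro g _
    funext q
    show ext g q.1 = g q
    rw [hext_mem g q.1 q.2]
  · -- right inverse
    intro f hf
    rw [Finset.mem_filter] at hf
    funext q
    show ext (fun p : ↥P => f p.1) q = f q
    by_cases hq : q ∈ P
    · exact hext_mem (fun p : ↥P => f p.1) q hq
    · exact (hext_not (fun p : ↥P => f p.1) q hq).trans (hf.2 q)
  · -- values agree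
    intro g _
    rw [← Finset.prod_filter_mul_prod_filter_not Finset.univ (fun q => q < α q)
      (fun q => A q (ext g q))]
    have e1 : ∏ q ∈ Finset.univ.filter (fun q => q < α q), A q (ext g q)
        = ∏ q : ↥P, A q.1 (g q) := by
      rw [← Finset.prod_coe_sort P]
      exact Finset.prod_congr rfl fun q _ => by rw [hext_mem g q.1 q.2]
    have e2 : ∏ q ∈ Finset.univ.filter (fun q => ¬ q < α q), A q (ext g q)
        = ∏ q : ↥P, A (α q.1) (g q) := by
      refine Finset.prod_bij' (fun q hq => (⟨α q, hswap q (by simpa [hP] using hq)⟩ : ↥P))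
        (fun p _ => α p.1) ?_ ?_ ?_ ?_ ?_
      · intro q _; exact Finset.mem_univ _
      · intro p _
        simp only [Finset.mem_filter, Finset.mem_univ, true_and, not_lt, hinv]
        exact le_of_lt ((hmemP p.1).1 p.2)
      · intro q _
        show α (α q) = q
        exact hinv q
      · intro p _
        exact Subtype.ext (hinv p.1)
      · intro q hq
        have hqP : q ∉ P := by simpa [hP] using hq
        show A q (ext g q) = A (α (α q)) (g ⟨α q, hswap q hqP⟩)
        rw [hext_not g q hqP, hinv q]
    rw [e1, e2, ← Finset.prod_mul_distrib]

end Assembly2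

/-- Wick/Isserlis theorem: the expectation under a product of standard
Gaussians of a product of `2n` centered jointly Gaussian linear forms
`X_q(z) = Σ_s A_{q,s} z_s` equals the sum, over all fixed-point-free
involutions (pairwise matchings) `α` of `{1,…,2n}`, of the product of the
pairwise covariances `C_{q,α(q)}`, where `C = AAᵀ` is the covariance matrix. -/
theorem wick_isserlis (r n : ℕ) (hn : 1 ≤ n)
    (A : Matrix (Fin (2 * n)) (Fin r) ℝ) :
    (∀ q q' : Fin (2 * n),
        (A * A.transpose) q q' =
          ∫ z : Fin r → ℝ, (∑ s, A q s * z s) * (∑ s, A q' s * z s)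
            ∂(Measure.pi fun _ : Fin r => gaussianReal 0 1)) ∧
    (∫ z : Fin r → ℝ, ∏ q : Fin (2 * n), ∑ s, A q s * z s
        ∂(Measure.pi fun _ : Fin r => gaussianReal 0 1)) =
      ∑ α ∈ Finset.univ.filter
          (fun α : Equiv.Perm (Fin (2 * n)) => α * α = 1 ∧ ∀ q, α q ≠ q),
        ∏ q ∈ Finset.univ.filter (fun q : Fin (2 * n) => q < α q),
          (A * A.transpose) q (α q) := by
  refine ⟨fun q q' => covariance_part A q q', ?_⟩
  rw [lhs_expand A]
  have hC : ∀ (α : Equiv.Perm (Fin (2*n))) (q : Fin (2*n)),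
      (A * A.transpose) q (α q) = ∑ s, A q s * A (α q) s := by
    intro α q
    rw [Matrix.mul_apply]
    exact Finset.sum_congr rfl fun s _ => by rw [Matrix.transpose_apply]
  have step1 : ∑ α ∈ Finset.univ.filter
        (fun α : Equiv.Perm (Fin (2 * n)) => α * α = 1 ∧ ∀ q, α q ≠ q),
        ∏ q ∈ Finset.univ.filter (fun q : Fin (2 * n) => q < α q),
          (A * A.transpose) q (α q)
      = ∑ α ∈ Finset.univ.filter
          (fun α : Equiv.Perm (Fin (2 * n)) => α * α = 1 ∧ ∀ q, α q ≠ q),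
          ∑ f ∈ Finset.univ.filter
            (fun f : Fin (2*n) → Fin r => ∀ q, f (α q) = f q),
            ∏ q, A q (f q) := by
    refine Finset.sum_congr rfl fun α hα => ?_
    have hα' := (Finset.mem_filter.1 hα).2
    exact (Finset.prod_congr rfl (fun q _ => hC α q)).trans
      (prod_cov_expand A α hα'.1 hα'.2)
  rw [step1]
  have step2 : ∀ f : Fin (2*n) → Fin r,
      ∑ α ∈ Finset.univ.filter
        (fun α : Equiv.Perm (Fin (2 * n)) => α * α = 1 ∧ ∀ q, α q ≠ q),
        (if ∀ q, f (α q) = f q then ∏ q, A q (f q) else 0)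
      = ((matchSet f (Finset.univ : Finset (Fin (2*n)))).card : ℝ) * ∏ q, A q (f q) := by
    intro f
    rw [← Finset.sum_filter]
    have hset : (Finset.univ.filter
        (fun α : Equiv.Perm (Fin (2 * n)) => α * α = 1 ∧ ∀ q, α q ≠ q)).filter
          (fun α => ∀ q, f (α q) = f q)
        = matchSet f (Finset.univ : Finset (Fin (2*n))) := by
      ext α
      simp only [Finset.mem_filter, Finset.mem_univ, true_and, mem_matchSet, iff_true]
      tauto
    rw [hset, Finset.sum_const, nsmul_eq_mul]
  rw [Finset.sum_congr rfl (fun α _ => Finset.sum_filter _ _), Finset.sum_comm,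
    Finset.sum_congr rfl (fun f _ => step2 f)]
  refine Finset.sum_congr rfl fun f _ => ?_
  rw [matchSet_card f Finset.univ]
  simp_rw [gmom_eq_dfact]
  push_cast
  ring
end
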